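/- arXiv:2405.07482 — 6 statements merged into one kernel-verified Lean document; each statement's English description precedes it below -/
import Mathlib

section
/- Let p ≥ 1, d ≥ 1, K ≥ 2, and let μ_1, …, μ_K be probability measures on ℝ^d with finite p-th moments, with θ ↦ max_{i,j} W_p^p(θ♯μ_i, θ♯μ_j) measurable on S^{d−1}. Then SMW_p^p(μ_1, …, μ_K; c) ≥ ∫_{S^{d−1}} max_{1≤i,j≤K} W_p^p(θ♯μ_i, θ♯μ_j) dσ(θ). -/
open MeasureTheory Metric Real

noncomputable section

/-- `ℝ^d`. -/
abbrev Rd (d : ℕ) := EuclideanSpace ℝ (Fin d)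

/-- The uniform probability measure `σ` on the unit sphere `S^{d-1} ⊂ ℝ^d`,
obtained by normalizing the surface measure coming from the Lebesgue measure. -/
noncomputable def uniformSphere (d : ℕ) :
    Measure (sphere (0 : Rd d) 1) :=
  ((volume : Measure (Rd d)).toSphere Set.univ)⁻¹ • (volume : Measure (Rd d)).toSphere

/-- A measure on `ℝ^d` has finite `p`-th moment. -/
def FiniteMoment {d : ℕ} (p : ℝ) (μ : Measure (Rd d)) : Prop :=
  Integrable (fun x => ‖x‖ ^ p) μ

/-- A measure on `ℝ` has finite `p`-th moment. -/
def FiniteMoment1 (p : ℝ) (ν : Measure ℝ) : Prop :=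
  Integrable (fun x => |x| ^ p) ν

/-- Pushforward `θ♯μ` of `μ` under `x ↦ ⟪θ, x⟫`. -/
def proj {d : ℕ} (θ : sphere (0 : Rd d) 1) (μ : Measure (Rd d)) : Measure ℝ :=
  μ.map (fun x => inner ℝ (θ : Rd d) x)

/-- The set of couplings of two measures on `ℝ`. -/
def Coupling (ν₁ ν₂ : Measure ℝ) : Set (Measure (ℝ × ℝ)) :=
  {γ | IsProbabilityMeasure γ ∧ γ.map Prod.fst = ν₁ ∧ γ.map Prod.snd = ν₂}

/-- One-dimensional `p`-Wasserstein cost `W_p^p`. -/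
def Wpp (p : ℝ) (ν₁ ν₂ : Measure ℝ) : ℝ :=
  sInf ((fun γ : Measure (ℝ × ℝ) => ∫ q, |q.1 - q.2| ^ p ∂γ) '' Coupling ν₁ ν₂)

/-- Sliced `p`-Wasserstein cost `SW_p^p`. -/
def SWpp {d : ℕ} (p : ℝ) (μ₁ μ₂ : Measure (Rd d)) : ℝ :=
  ∫ θ, Wpp p (proj θ μ₁) (proj θ μ₂) ∂(uniformSphere d)

/-- The set of multi-marginal couplings of `K` measures on `ℝ^d`. -/
def MCoupling {d K : ℕ} (μs : Fin K → Measure (Rd d)) : Set (Measure (Fin K → Rd d)) :=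
  {pl | IsProbabilityMeasure pl ∧ ∀ k, pl.map (fun x => x k) = μs k}

/-- The inner multi-marginal transport cost along direction `θ`, with the maximal
ground metric `c(t₁,…,t_K) = max_{i,j} |t_i - t_j|`. -/
def SMWtheta {d K : ℕ} (p : ℝ) (μs : Fin K → Measure (Rd d))
    (θ : sphere (0 : Rd d) 1) : ℝ :=
  sInf ((fun pl : Measure (Fin K → Rd d) =>
      ∫ x, (⨆ i, ⨆ j, |inner ℝ (θ : Rd d) (x i) - inner ℝ (θ : Rd d) (x j)|) ^ p ∂pl)
    '' MCoupling μs)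

/-- Sliced multi-marginal Wasserstein cost `SMW_p^p` with the maximal ground metric. -/
def SMWpp {d K : ℕ} (p : ℝ) (μs : Fin K → Measure (Rd d)) : ℝ :=
  ∫ θ, SMWtheta p μs θ ∂(uniformSphere d)

section Aux

open Filter Finset

variable {d K : ℕ} {p : ℝ}

lemma smw_map_eval_pi (μs : Fin K → Measure (Rd d)) (hμs : ∀ k, IsProbabilityMeasure (μs k))
    (k : Fin K) : (Measure.pi μs).map (fun x => x k) = μs k := by
  haveI := hμs
  ext s hs
  rw [Measure.map_apply (measurable_pi_apply k) hs,
    show (fun x : Fin K → Rd d => x k) ⁻¹' s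
        = Set.pi Set.univ (Function.update (fun _ : Fin K => (Set.univ : Set (Rd d))) k s)
      from Set.eval_preimage, Measure.pi_pi]
  rw [Finset.prod_eq_single k
    (fun b _ hb => by rw [Function.update_of_ne hb]; exact measure_univ)
    (fun h => absurd (Finset.mem_univ k) h), Function.update_self]

lemma smw_inner_eval_measurable (θ : sphere (0 : Rd d) 1) (i : Fin K) :
    Measurable fun x : Fin K → Rd d => (inner ℝ (θ : Rd d) (x i) : ℝ) :=
  ((continuous_const.inner continuous_id).measurable).comp (measurable_pi_apply i)

lemma smw_cost_nonneg [Nonempty (Fin K)] (θ : sphere (0 : Rd d) 1) (x : Fin K → Rd d) :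
    0 ≤ ⨆ i, ⨆ j, |(inner ℝ (θ : Rd d) (x i) : ℝ) - inner ℝ (θ : Rd d) (x j)| :=
  Real.iSup_nonneg fun _ => Real.iSup_nonneg fun _ => abs_nonneg _

lemma smw_cost_le_sum [Nonempty (Fin K)] (hp : 1 ≤ p) (θ : sphere (0 : Rd d) 1)
    (x : Fin K → Rd d) :
    (⨆ i, ⨆ j, |(inner ℝ (θ : Rd d) (x i) : ℝ) - inner ℝ (θ : Rd d) (x j)|) ^ p
      ≤ 2 ^ p * ∑ k, ‖x k‖ ^ p := by
  have hθ : ‖(θ : Rd d)‖ = 1 := mem_sphere_zero_iff_norm.mp θ.2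
  set s : ℝ := Finset.univ.sup' Finset.univ_nonempty (fun k => ‖x k‖) with hs
  obtain ⟨k₀, -, hk₀⟩ := Finset.exists_mem_eq_sup' (Finset.univ_nonempty (α := Fin K))
    (fun k => ‖x k‖)
  have hs0 : 0 ≤ s := by rw [hs, hk₀]; exact norm_nonneg _
  have hinner : ∀ i, |(inner ℝ (θ : Rd d) (x i) : ℝ)| ≤ s := fun i => by
    calc |(inner ℝ (θ : Rd d) (x i) : ℝ)| ≤ ‖(θ : Rd d)‖ * ‖x i‖ := abs_real_inner_le_norm _ _
      _ = ‖x i‖ := by rw [hθ, one_mul]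
      _ ≤ s := Finset.le_sup' (fun k => ‖x k‖) (Finset.mem_univ i)
  have hcost : (⨆ i, ⨆ j, |(inner ℝ (θ : Rd d) (x i) : ℝ) - inner ℝ (θ : Rd d) (x j)|) ≤ 2 * s := by
    refine ciSup_le fun i => ciSup_le fun j => ?_
    calc |(inner ℝ (θ : Rd d) (x i) : ℝ) - inner ℝ (θ : Rd d) (x j)|
        ≤ |(inner ℝ (θ : Rd d) (x i) : ℝ)| + |(inner ℝ (θ : Rd d) (x j) : ℝ)| := abs_sub _ _
      _ ≤ s + s := add_le_add (hinner i) (hinner j)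
      _ = 2 * s := by ring
  calc (⨆ i, ⨆ j, |(inner ℝ (θ : Rd d) (x i) : ℝ) - inner ℝ (θ : Rd d) (x j)|) ^ p
      ≤ (2 * s) ^ p := Real.rpow_le_rpow (smw_cost_nonneg θ x) hcost (by linarith)
    _ = 2 ^ p * s ^ p := Real.mul_rpow (by norm_num) hs0
    _ ≤ 2 ^ p * ∑ k, ‖x k‖ ^ p := by
        refine mul_le_mul_of_nonneg_left ?_ (Real.rpow_nonneg (by norm_num) p)
        rw [hs, hk₀]
        exact Finset.single_le_sum (fun k _ => Real.rpow_nonneg (norm_nonneg _) p)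
          (Finset.mem_univ k₀)

lemma smw_bound_integrable (hp : 1 ≤ p) (μs : Fin K → Measure (Rd d))
    (hμsm : ∀ k, FiniteMoment p (μs k)) {pl : Measure (Fin K → Rd d)}
    (hpl : pl ∈ MCoupling μs) :
    Integrable (fun x : Fin K → Rd d => 2 ^ p * ∑ k, ‖x k‖ ^ p) pl ∧
      ∫ x, (2 ^ p * ∑ k, ‖x k‖ ^ p : ℝ) ∂pl = 2 ^ p * ∑ k, ∫ y, ‖y‖ ^ p ∂(μs k) := by
  have hfm : ∀ ν : Measure (Rd d), AEStronglyMeasurable (fun y : Rd d => ‖y‖ ^ p) ν :=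
    fun ν => (continuous_norm.rpow_const fun y => Or.inr (by linarith)).aestronglyMeasurable
  have hint : ∀ k, Integrable (fun x : Fin K → Rd d => ‖x k‖ ^ p) pl := fun k => by
    have := (integrable_map_measure (hfm (pl.map fun x => x k))
      (measurable_pi_apply k).aemeasurable).mp (by rw [hpl.2 k]; exact hμsm k)
    exact this
  have hval : ∀ k, ∫ x, (‖x k‖ ^ p : ℝ) ∂pl = ∫ y, ‖y‖ ^ p ∂(μs k) := fun k => by
    rw [← hpl.2 k, integral_map (measurable_pi_apply k).aemeasurable
      (hfm (pl.map fun x => x k))]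
  refine ⟨(integrable_finset_sum _ fun k _ => hint k).const_mul _, ?_⟩
  rw [integral_const_mul, integral_finset_sum _ fun k _ => hint k]
  exact congrArg _ (Finset.sum_congr rfl fun k _ => hval k)

lemma smw_cost_measurable [Nonempty (Fin K)] (hp : 1 ≤ p) (θ : sphere (0 : Rd d) 1) :
    Measurable (fun x : Fin K → Rd d =>
      (⨆ i, ⨆ j, |(inner ℝ (θ : Rd d) (x i) : ℝ) - inner ℝ (θ : Rd d) (x j)|) ^ p) := by
  have h : Measurable (fun x : Fin K → Rd d =>
      ⨆ i, ⨆ j, |(inner ℝ (θ : Rd d) (x i) : ℝ) - inner ℝ (θ : Rd d) (x j)|) :=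
    Measurable.iSup fun i => Measurable.iSup fun j =>
      ((smw_inner_eval_measurable θ i).sub (smw_inner_eval_measurable θ j)).abs
  exact (Real.continuous_rpow_const (by linarith)).measurable.comp h

lemma smw_cost_integrable [Nonempty (Fin K)] (hp : 1 ≤ p) (μs : Fin K → Measure (Rd d))
    (hμsm : ∀ k, FiniteMoment p (μs k)) {pl : Measure (Fin K → Rd d)}
    (hpl : pl ∈ MCoupling μs) (θ : sphere (0 : Rd d) 1) :
    Integrable (fun x : Fin K → Rd d =>
      (⨆ i, ⨆ j, |(inner ℝ (θ : Rd d) (x i) : ℝ) - inner ℝ (θ : Rd d) (x j)|) ^ p) pl := by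
  refine ((smw_bound_integrable hp μs hμsm hpl).1).mono'
    (smw_cost_measurable hp θ).aestronglyMeasurable (Filter.Eventually.of_forall fun x => ?_)
  rw [Real.norm_eq_abs, abs_of_nonneg (Real.rpow_nonneg (smw_cost_nonneg θ x) p)]
  exact smw_cost_le_sum hp θ x

lemma smw_wpp_le [Nonempty (Fin K)] (hp : 1 ≤ p) (μs : Fin K → Measure (Rd d))
    (hμsm : ∀ k, FiniteMoment p (μs k)) (θ : sphere (0 : Rd d) 1)
    {pl : Measure (Fin K → Rd d)} (hpl : pl ∈ MCoupling μs) (i j : Fin K) :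
    Wpp p (proj θ (μs i)) (proj θ (μs j)) ≤
      ∫ x, (⨆ i', ⨆ j', |(inner ℝ (θ : Rd d) (x i') : ℝ) - inner ℝ (θ : Rd d) (x j')|) ^ p ∂pl := by
  haveI := hpl.1
  set T : (Fin K → Rd d) → ℝ × ℝ :=
    fun x => ((inner ℝ (θ : Rd d) (x i) : ℝ), (inner ℝ (θ : Rd d) (x j) : ℝ)) with hTdef
  have hTm : Measurable T :=
    (smw_inner_eval_measurable θ i).prodMk (smw_inner_eval_measurable θ j)
  have hmarg : ∀ k : Fin K,
      ((μs k).map fun v : Rd d => (inner ℝ (θ : Rd d) v : ℝ)) = pl.map fun x => (inner ℝ (θ : Rd d) (x k) : ℝ) := by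
    intro k
    have hg : Measurable fun v : Rd d => (inner ℝ (θ : Rd d) v : ℝ) :=
      (continuous_const.inner continuous_id).measurable
    rw [← hpl.2 k, Measure.map_map hg (measurable_pi_apply k)]
    rfl
  have hγ : pl.map T ∈ Coupling (proj θ (μs i)) (proj θ (μs j)) := by
    refine ⟨MeasureTheory.Measure.isProbabilityMeasure_map hTm.aemeasurable, ?_, ?_⟩
    · rw [Measure.map_map measurable_fst hTm]
      exact ((hmarg i).symm : _)
    · rw [Measure.map_map measurable_snd hTm]
      exact ((hmarg j).symm : _)
  have habs : AEStronglyMeasurable (fun q : ℝ × ℝ => |q.1 - q.2| ^ p) (pl.map T) :=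
    ((Real.continuous_rpow_const (by linarith : (0:ℝ) ≤ p)).measurable.comp
      (measurable_fst.sub measurable_snd).abs).aestronglyMeasurable
  have h1 : Wpp p (proj θ (μs i)) (proj θ (μs j)) ≤ ∫ q, |q.1 - q.2| ^ p ∂(pl.map T) := by
    unfold Wpp
    refine csInf_le ⟨0, ?_⟩ (Set.mem_image_of_mem _ hγ)
    rintro v ⟨γ, -, rfl⟩
    exact integral_nonneg fun q => Real.rpow_nonneg (abs_nonneg _) _
  have h2 : ∫ q, |q.1 - q.2| ^ p ∂(pl.map T)
      = ∫ x, |(inner ℝ (θ : Rd d) (x i) : ℝ) - inner ℝ (θ : Rd d) (x j)| ^ p ∂pl := by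
    rw [integral_map hTm.aemeasurable habs]
  have h3 : ∫ x, |(inner ℝ (θ : Rd d) (x i) : ℝ) - inner ℝ (θ : Rd d) (x j)| ^ p ∂pl ≤
      ∫ x, (⨆ i', ⨆ j', |(inner ℝ (θ : Rd d) (x i') : ℝ) - inner ℝ (θ : Rd d) (x j')|) ^ p ∂pl := by
    refine integral_mono_of_nonneg (Filter.Eventually.of_forall fun x =>
        Real.rpow_nonneg (abs_nonneg _) _)
      (smw_cost_integrable hp μs hμsm hpl θ) (Filter.Eventually.of_forall fun x => ?_)
    refine Real.rpow_le_rpow (abs_nonneg _) ?_ (by linarith)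
    calc |(inner ℝ (θ : Rd d) (x i) : ℝ) - inner ℝ (θ : Rd d) (x j)|
        ≤ ⨆ j', |(inner ℝ (θ : Rd d) (x i) : ℝ) - inner ℝ (θ : Rd d) (x j')| :=
          le_ciSup (f := fun j' =>
            |(inner ℝ (θ : Rd d) (x i) : ℝ) - inner ℝ (θ : Rd d) (x j')|)
            (Set.finite_range _).bddAbove j
      _ ≤ ⨆ i', ⨆ j', |(inner ℝ (θ : Rd d) (x i') : ℝ) - inner ℝ (θ : Rd d) (x j')| :=
          le_ciSup (f := fun i' => ⨆ j',
            |(inner ℝ (θ : Rd d) (x i') : ℝ) - inner ℝ (θ : Rd d) (x j')|)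
            (Set.finite_range _).bddAbove i
  calc Wpp p (proj θ (μs i)) (proj θ (μs j)) ≤ ∫ q, |q.1 - q.2| ^ p ∂(pl.map T) := h1
    _ = _ := h2
    _ ≤ _ := h3

lemma smw_theta_measurable [Nonempty (Fin K)] (hp : 1 ≤ p) (μs : Fin K → Measure (Rd d))
    (hμs : ∀ k, IsProbabilityMeasure (μs k)) (hμsm : ∀ k, FiniteMoment p (μs k)) :
    Measurable (SMWtheta p μs) := by
  haveI := hμs
  have hbdd : ∀ θ : sphere (0 : Rd d) 1, BddBelow ((fun pl : Measure (Fin K → Rd d) =>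
      ∫ x, (⨆ i, ⨆ j, |(inner ℝ (θ : Rd d) (x i) : ℝ) - inner ℝ (θ : Rd d) (x j)|) ^ p ∂pl)
        '' MCoupling μs) := by
    intro θ
    refine ⟨0, ?_⟩
    rintro v ⟨pl, -, rfl⟩
    exact integral_nonneg fun x => Real.rpow_nonneg (smw_cost_nonneg θ x) _
  have husc : UpperSemicontinuous (SMWtheta p μs) := by
    intro θ₀ y hy
    unfold SMWtheta at hy
    have hpl₀ : Measure.pi μs ∈ MCoupling μs := ⟨inferInstance, fun k => smw_map_eval_pi μs hμs k⟩
    obtain ⟨v, hv, hvy⟩ := exists_lt_of_csInf_lt ⟨_, Set.mem_image_of_mem _ hpl₀⟩ hy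
    obtain ⟨pl, hpl, rfl⟩ := hv
    haveI := hpl.1
    have hcont : Continuous fun θ : sphere (0 : Rd d) 1 =>
        ∫ x, (⨆ i, ⨆ j, |(inner ℝ (θ : Rd d) (x i) : ℝ) - inner ℝ (θ : Rd d) (x j)|) ^ p ∂pl := by
      refine continuous_of_dominated (fun θ => (smw_cost_measurable hp θ).aestronglyMeasurable)
        (fun θ => Filter.Eventually.of_forall fun x => ?_)
        (smw_bound_integrable hp μs hμsm hpl).1
        (Filter.Eventually.of_forall fun x => ?_)
      · rw [Real.norm_eq_abs, abs_of_nonneg (Real.rpow_nonneg (smw_cost_nonneg _ x) p)]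
        exact smw_cost_le_sum hp _ x
      · have hsup : Continuous fun θ : sphere (0 : Rd d) 1 =>
            ⨆ i, ⨆ j, |(inner ℝ (θ : Rd d) (x i) : ℝ) - inner ℝ (θ : Rd d) (x j)| := by
          simp_rw [← Finset.sup'_univ_eq_ciSup]
          refine Continuous.finset_sup'_apply Finset.univ_nonempty fun i _ => ?_
          refine Continuous.finset_sup'_apply Finset.univ_nonempty fun j _ => ?_
          exact ((continuous_subtype_val.inner continuous_const).sub
            (continuous_subtype_val.inner continuous_const)).abs
        exact hsup.rpow_const fun θ => Or.inr (by linarith)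
    have hev : ∀ᶠ θ : sphere (0 : Rd d) 1 in nhds θ₀, (∫ x,
        (⨆ i, ⨆ j, |(inner ℝ (θ : Rd d) (x i) : ℝ) - inner ℝ (θ : Rd d) (x j)|) ^ p ∂pl) < y :=
      (isOpen_lt hcont continuous_const).mem_nhds hvy
    filter_upwards [hev] with θ hθ
    exact lt_of_le_of_lt (csInf_le (hbdd θ) (Set.mem_image_of_mem _ hpl)) hθ
  exact husc.measurable

end Aux

/-- The sliced multi-marginal Wasserstein cost with the maximal ground metric
dominates the sphere-average of the largest pairwise projected Wasserstein cost. -/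
theorem smw_ge_integral_max_pairwise (p : ℝ) (hp : 1 ≤ p) (d : ℕ) (hd : 1 ≤ d)
    (K : ℕ) (hK : 2 ≤ K) (μs : Fin K → Measure (Rd d))
    (hμs : ∀ k, IsProbabilityMeasure (μs k)) (hμsm : ∀ k, FiniteMoment p (μs k))
    (hmeas : Measurable fun θ : sphere (0 : Rd d) 1 =>
      ⨆ i, ⨆ j, Wpp p (proj θ (μs i)) (proj θ (μs j))) :
    ∫ θ, (⨆ i, ⨆ j, Wpp p (proj θ (μs i)) (proj θ (μs j))) ∂(uniformSphere d) ≤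
      SMWpp p μs := by
  haveI : ∀ k, IsProbabilityMeasure (μs k) := hμs
  haveI : Nonempty (Fin K) := ⟨⟨0, by omega⟩⟩
  haveI : IsFiniteMeasure (uniformSphere d) := by
    constructor
    rw [uniformSphere, Measure.smul_apply, smul_eq_mul]
    exact lt_of_le_of_lt (ENNReal.inv_mul_le_one _) ENNReal.one_lt_top
  set C : ℝ := 2 ^ p * ∑ k, ∫ y, ‖y‖ ^ p ∂(μs k) with hC
  have hpl₀ : Measure.pi μs ∈ MCoupling μs := ⟨inferInstance, fun k => smw_map_eval_pi μs hμs k⟩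
  have hSMW_nonneg : ∀ θ, 0 ≤ SMWtheta p μs θ := by
    intro θ
    refine Real.sInf_nonneg ?_
    rintro v ⟨pl, -, rfl⟩
    exact integral_nonneg fun x => Real.rpow_nonneg (smw_cost_nonneg θ x) _
  have hVleC : ∀ (θ : sphere (0 : Rd d) 1) (pl : Measure (Fin K → Rd d)), pl ∈ MCoupling μs →
      (∫ x, (⨆ i, ⨆ j, |(inner ℝ (θ : Rd d) (x i) : ℝ) - inner ℝ (θ : Rd d) (x j)|) ^ p ∂pl) ≤ C := by
    intro θ pl hpl
    obtain ⟨hInt, hEq⟩ := smw_bound_integrable hp μs hμsm hpl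
    calc (∫ x, (⨆ i, ⨆ j, |(inner ℝ (θ : Rd d) (x i) : ℝ) - inner ℝ (θ : Rd d) (x j)|) ^ p ∂pl)
        ≤ ∫ x, (2 ^ p * ∑ k, ‖x k‖ ^ p : ℝ) ∂pl :=
          integral_mono_of_nonneg (Filter.Eventually.of_forall fun x =>
              Real.rpow_nonneg (smw_cost_nonneg θ x) _) hInt
            (Filter.Eventually.of_forall fun x => smw_cost_le_sum hp θ x)
      _ = C := hEq
  have hSMW_leC : ∀ θ, SMWtheta p μs θ ≤ C := by
    intro θ
    refine le_trans ?_ (hVleC θ _ hpl₀)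
    unfold SMWtheta
    refine csInf_le ⟨0, ?_⟩ (Set.mem_image_of_mem _ hpl₀)
    rintro v ⟨pl, -, rfl⟩
    exact integral_nonneg fun x => Real.rpow_nonneg (smw_cost_nonneg θ x) _
  have hfg : ∀ θ, (⨆ i, ⨆ j, Wpp p (proj θ (μs i)) (proj θ (μs j))) ≤ SMWtheta p μs θ := by
    intro θ
    unfold SMWtheta
    refine le_csInf ⟨_, Set.mem_image_of_mem _ hpl₀⟩ ?_
    rintro v ⟨pl, hpl, rfl⟩
    exact ciSup_le fun i => ciSup_le fun j => smw_wpp_le hp μs hμsm θ hpl i j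
  have hf_nonneg : ∀ θ, 0 ≤ ⨆ i, ⨆ j, Wpp p (proj θ (μs i)) (proj θ (μs j)) := by
    intro θ
    refine Real.iSup_nonneg fun i => Real.iSup_nonneg fun j => Real.sInf_nonneg ?_
    rintro v ⟨γ, -, rfl⟩
    exact integral_nonneg fun q => Real.rpow_nonneg (abs_nonneg _) _
  have hg_meas : Measurable (SMWtheta p μs) := smw_theta_measurable hp μs hμs hμsm
  have hf_int : Integrable (fun θ => ⨆ i, ⨆ j, Wpp p (proj θ (μs i)) (proj θ (μs j)))
      (uniformSphere d) := by
    refine (integrable_const C).mono' hmeas.aestronglyMeasurable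
      (Filter.Eventually.of_forall fun θ => ?_)
    rw [Real.norm_eq_abs, abs_of_nonneg (hf_nonneg θ)]
    exact (hfg θ).trans (hSMW_leC θ)
  have hg_int : Integrable (SMWtheta p μs) (uniformSphere d) := by
    refine (integrable_const C).mono' hg_meas.aestronglyMeasurable
      (Filter.Eventually.of_forall fun θ => ?_)
    rw [Real.norm_eq_abs, abs_of_nonneg (hSMW_nonneg θ)]
    exact hSMW_leC θ
  unfold SMWpp
  exact integral_mono hf_int hg_int hfg
end
end

section
/- Let p ≥ 1, d ≥ 1, K ≥ 2, and let μ_1, μ_2, …, μ_K be probability measures on ℝ^d with finite p-th moments, with θ ↦ max_{2≤k≤K} W_p^p(θ♯μ_1, θ♯μ_k) measurable on S^{d−1}. Then SMW_p^p(μ_1, μ_2, …, μ_K; c) ≥ USF(μ_1; μ_{2:K}), i.e., the sliced multi-marginal Wasserstein cost with the maximal ground metric is at least ∫_{S^{d−1}} max_{2≤k≤K} W_p^p(θ♯μ_1, θ♯μ_k) dσ(θ). -/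
open MeasureTheory Metric Real

noncomputable section

section AuxLemmas

open Filter in
lemma continuous_ciSup_fin {X : Type*} [TopologicalSpace X] {n : ℕ}
    {f : Fin (n + 1) → X → ℝ} (hf : ∀ i, Continuous (f i)) :
    Continuous fun a => ⨆ i, f i a := by
  have h : ∀ a, (⨆ i, f i a) = Finset.univ.sup' Finset.univ_nonempty (fun i => f i a) :=
    fun a => (Finset.sup'_univ_eq_ciSup _).symm
  simp_rw [h]
  rw [continuous_iff_continuousAt]
  intro x
  exact Filter.Tendsto.finset_sup'_nhds_apply _ (fun i _ => (hf i).continuousAt)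

variable {d n : ℕ} {p : ℝ}

/-- The inner cost function. -/
def costF (p : ℝ) {d n : ℕ} (θ : sphere (0 : Rd d) 1) (x : Fin (n + 1) → Rd d) : ℝ :=
  (⨆ i, ⨆ j, |inner ℝ (θ : Rd d) (x i) - inner ℝ (θ : Rd d) (x j)|) ^ p

lemma costF_base_nonneg (θ : sphere (0 : Rd d) 1) (x : Fin (n + 1) → Rd d) :
    (0 : ℝ) ≤ ⨆ i, ⨆ j, |(inner ℝ (θ : Rd d) (x i) : ℝ) - inner ℝ (θ : Rd d) (x j)| :=
  Real.iSup_nonneg fun _ => Real.iSup_nonneg fun _ => abs_nonneg _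

lemma costF_nonneg (θ : sphere (0 : Rd d) 1) (x : Fin (n + 1) → Rd d) :
    0 ≤ costF p θ x :=
  Real.rpow_nonneg (costF_base_nonneg θ x) p

lemma continuous_inner_apply (θ : sphere (0 : Rd d) 1) (i : Fin (n + 1)) :
    Continuous fun x : Fin (n + 1) → Rd d => (inner ℝ (θ : Rd d) (x i) : ℝ) :=
  continuous_const.inner (continuous_apply i)

lemma costF_continuous (hp : 0 ≤ p) (θ : sphere (0 : Rd d) 1) :
    Continuous fun x : Fin (n + 1) → Rd d => costF p θ x := by
  refine Continuous.rpow_const ?_ fun x => Or.inr hp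
  refine continuous_ciSup_fin fun i => continuous_ciSup_fin fun j => ?_
  exact ((continuous_inner_apply θ i).sub (continuous_inner_apply θ j)).abs

lemma costF_le (hp : 0 ≤ p) (θ : sphere (0 : Rd d) 1) (x : Fin (n + 1) → Rd d) :
    costF p θ x ≤ (2 : ℝ) ^ p * ∑ i, ‖x i‖ ^ p := by
  obtain ⟨i0, hi0⟩ := Finite.exists_max fun i : Fin (n + 1) => ‖x i‖
  have hθ : ‖(θ : Rd d)‖ = 1 := mem_sphere_zero_iff_norm.mp θ.2
  have h1 : ∀ i, |(inner ℝ (θ : Rd d) (x i) : ℝ)| ≤ ‖x i0‖ := by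
    intro i
    calc |(inner ℝ (θ : Rd d) (x i) : ℝ)| ≤ ‖(θ : Rd d)‖ * ‖x i‖ := abs_real_inner_le_norm _ _
      _ = ‖x i‖ := by rw [hθ, one_mul]
      _ ≤ ‖x i0‖ := hi0 i
  have hS : (⨆ i, ⨆ j, |(inner ℝ (θ : Rd d) (x i) : ℝ) - inner ℝ (θ : Rd d) (x j)|)
      ≤ 2 * ‖x i0‖ := by
    refine ciSup_le fun i => ciSup_le fun j => ?_
    calc |(inner ℝ (θ : Rd d) (x i) : ℝ) - inner ℝ (θ : Rd d) (x j)|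
        ≤ |(inner ℝ (θ : Rd d) (x i) : ℝ)| + |(inner ℝ (θ : Rd d) (x j) : ℝ)| := abs_sub _ _
      _ ≤ ‖x i0‖ + ‖x i0‖ := add_le_add (h1 i) (h1 j)
      _ = 2 * ‖x i0‖ := (two_mul _).symm
  calc costF p θ x ≤ (2 * ‖x i0‖) ^ p :=
        Real.rpow_le_rpow (costF_base_nonneg θ x) hS hp
    _ = (2 : ℝ) ^ p * ‖x i0‖ ^ p := Real.mul_rpow (by norm_num) (norm_nonneg _)
    _ ≤ (2 : ℝ) ^ p * ∑ i, ‖x i‖ ^ p := by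
        refine mul_le_mul_of_nonneg_left ?_ (Real.rpow_nonneg (by norm_num) p)
        exact Finset.single_le_sum (fun i _ => Real.rpow_nonneg (norm_nonneg _) p)
          (Finset.mem_univ i0)

lemma integrable_sum_norm_rpow {ν : Fin (n + 1) → Measure (Rd d)}
    (hνm : ∀ i, FiniteMoment p (ν i)) {pl : Measure (Fin (n + 1) → Rd d)}
    (hpl : pl ∈ MCoupling ν) :
    Integrable (fun x : Fin (n + 1) → Rd d => ∑ i, ‖x i‖ ^ p) pl := by
  refine integrable_finset_sum _ fun i _ => ?_
  have h : Integrable (fun y : Rd d => ‖y‖ ^ p) (pl.map (fun x => x i)) := by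
    rw [hpl.2 i]; exact hνm i
  exact h.comp_measurable (measurable_pi_apply i)

lemma integrable_costF (hp : 0 ≤ p) {ν : Fin (n + 1) → Measure (Rd d)}
    (hνm : ∀ i, FiniteMoment p (ν i)) {pl : Measure (Fin (n + 1) → Rd d)}
    (hpl : pl ∈ MCoupling ν) (θ : sphere (0 : Rd d) 1) :
    Integrable (fun x => costF p θ x) pl := by
  refine ((integrable_sum_norm_rpow hνm hpl).const_mul ((2 : ℝ) ^ p)).mono'
    ((costF_continuous hp θ).aestronglyMeasurable) ?_
  filter_upwards with x
  rw [Real.norm_eq_abs, abs_of_nonneg (costF_nonneg θ x)]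
  exact costF_le hp θ x

lemma pi_map_eval {ν : Fin (n + 1) → Measure (Rd d)}
    (hν : ∀ i, IsProbabilityMeasure (ν i)) (i : Fin (n + 1)) :
    (Measure.pi ν).map (fun x => x i) = ν i := by
  haveI := hν
  ext s hs
  rw [Measure.map_apply (measurable_pi_apply i) hs]
  have hpre : (fun x : Fin (n + 1) → Rd d => x i) ⁻¹' s =
      Set.univ.pi (Function.update (fun _ => Set.univ) i s) := Set.eval_preimage
  rw [hpre, Measure.pi_pi]
  rw [Finset.prod_eq_single i (fun j _ hj => by
        simp [Function.update_of_ne hj, measure_univ]) (by simp)]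
  simp

lemma mcoupling_nonempty {ν : Fin (n + 1) → Measure (Rd d)}
    (hν : ∀ i, IsProbabilityMeasure (ν i)) : (MCoupling ν).Nonempty := by
  haveI := hν
  exact ⟨Measure.pi ν, inferInstance, pi_map_eval hν⟩

lemma wpp_bddBelow (p : ℝ) (ν₁ ν₂ : Measure ℝ) :
    ∀ z ∈ (fun γ : Measure (ℝ × ℝ) => ∫ q, |q.1 - q.2| ^ p ∂γ) '' Coupling ν₁ ν₂, 0 ≤ z := by
  rintro z ⟨γ, _, rfl⟩
  exact integral_nonneg fun q => Real.rpow_nonneg (abs_nonneg _) p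

lemma wpp_nonneg (p : ℝ) (ν₁ ν₂ : Measure ℝ) : 0 ≤ Wpp p ν₁ ν₂ :=
  Real.sInf_nonneg (wpp_bddBelow p ν₁ ν₂)

lemma smwtheta_bddBelow (p : ℝ) {ν : Fin (n + 1) → Measure (Rd d)}
    (θ : sphere (0 : Rd d) 1) :
    ∀ z ∈ (fun pl : Measure (Fin (n + 1) → Rd d) =>
      ∫ x, (⨆ i, ⨆ j, |(inner ℝ (θ : Rd d) (x i) : ℝ) - inner ℝ (θ : Rd d) (x j)|) ^ p ∂pl)
      '' MCoupling ν, (0 : ℝ) ≤ z := by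
  rintro z ⟨pl, _, rfl⟩
  exact integral_nonneg fun x => costF_nonneg θ x

lemma wpp_le_cost (hp : 1 ≤ p) {ν : Fin (n + 1) → Measure (Rd d)}
    (hνm : ∀ i, FiniteMoment p (ν i)) {pl : Measure (Fin (n + 1) → Rd d)}
    (hpl : pl ∈ MCoupling ν) (θ : sphere (0 : Rd d) 1) (a b : Fin (n + 1)) :
    Wpp p (proj θ (ν a)) (proj θ (ν b)) ≤ ∫ x, costF p θ x ∂pl := by
  have hp0 : 0 ≤ p := le_trans zero_le_one hp
  obtain ⟨hplP, hplm⟩ := hpl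
  have hinner : ∀ i : Fin (n + 1),
      Measurable fun x : Fin (n + 1) → Rd d => (inner ℝ (θ : Rd d) (x i) : ℝ) :=
    fun i => (continuous_inner_apply θ i).measurable
  have hinner1 : Measurable fun y : Rd d => (inner ℝ (θ : Rd d) y : ℝ) :=
    (continuous_const.inner continuous_id).measurable
  set T : (Fin (n + 1) → Rd d) → ℝ × ℝ :=
    fun x => (inner ℝ (θ : Rd d) (x a), inner ℝ (θ : Rd d) (x b)) with hT
  have hTm : Measurable T := (hinner a).prodMk (hinner b)
  haveI := hplP
  have hcoup : pl.map T ∈ Coupling (proj θ (ν a)) (proj θ (ν b)) := by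
    refine ⟨Measure.isProbabilityMeasure_map hTm.aemeasurable, ?_, ?_⟩
    · rw [Measure.map_map measurable_fst hTm]
      have h1 : Prod.fst ∘ T =
          (fun y : Rd d => (inner ℝ (θ : Rd d) y : ℝ)) ∘ (fun x => x a) := rfl
      rw [h1, ← Measure.map_map hinner1 (measurable_pi_apply a), hplm a]
      rfl
    · rw [Measure.map_map measurable_snd hTm]
      have h1 : Prod.snd ∘ T =
          (fun y : Rd d => (inner ℝ (θ : Rd d) y : ℝ)) ∘ (fun x => x b) := rfl
      rw [h1, ← Measure.map_map hinner1 (measurable_pi_apply b), hplm b]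
      rfl
  have hcont2 : Continuous fun q : ℝ × ℝ => |q.1 - q.2| ^ p :=
    Continuous.rpow_const ((continuous_fst.sub continuous_snd).abs) fun _ => Or.inr hp0
  have hWle : Wpp p (proj θ (ν a)) (proj θ (ν b)) ≤ ∫ q, |q.1 - q.2| ^ p ∂(pl.map T) := by
    refine csInf_le ⟨0, fun z hz => wpp_bddBelow p _ _ z hz⟩ ?_
    exact ⟨pl.map T, hcoup, rfl⟩
  refine le_trans hWle ?_
  rw [integral_map hTm.aemeasurable hcont2.aestronglyMeasurable]
  refine integral_mono_of_nonneg ?_ (integrable_costF hp0 hνm ⟨hplP, hplm⟩ θ) ?_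
  · filter_upwards with x
    exact Real.rpow_nonneg (abs_nonneg _) p
  · filter_upwards with x
    refine Real.rpow_le_rpow (abs_nonneg _) ?_ hp0
    calc |(inner ℝ (θ : Rd d) (x a) : ℝ) - inner ℝ (θ : Rd d) (x b)|
        ≤ ⨆ j, |(inner ℝ (θ : Rd d) (x a) : ℝ) - inner ℝ (θ : Rd d) (x j)| :=
          le_ciSup (f := fun j =>
            |(inner ℝ (θ : Rd d) (x a) : ℝ) - inner ℝ (θ : Rd d) (x j)|)
            (Finite.bddAbove_range _) b
      _ ≤ ⨆ i, ⨆ j, |(inner ℝ (θ : Rd d) (x i) : ℝ) - inner ℝ (θ : Rd d) (x j)| :=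
          le_ciSup (f := fun i => ⨆ j,
            |(inner ℝ (θ : Rd d) (x i) : ℝ) - inner ℝ (θ : Rd d) (x j)|)
            (Finite.bddAbove_range _) a

lemma cost_integral_continuous (hp : 0 ≤ p) {ν : Fin (n + 1) → Measure (Rd d)}
    (hνm : ∀ i, FiniteMoment p (ν i)) {pl : Measure (Fin (n + 1) → Rd d)}
    (hpl : pl ∈ MCoupling ν) :
    Continuous fun θ : sphere (0 : Rd d) 1 => ∫ x, costF p θ x ∂pl := by
  refine continuous_of_dominated (F := fun θ x => costF p θ x)
    (bound := fun x => (2 : ℝ) ^ p * ∑ i, ‖x i‖ ^ p)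
    (fun θ => (costF_continuous hp θ).aestronglyMeasurable) (fun θ => ?_)
    ((integrable_sum_norm_rpow hνm hpl).const_mul _) ?_
  · filter_upwards with x
    rw [Real.norm_eq_abs, abs_of_nonneg (costF_nonneg θ x)]
    exact costF_le hp θ x
  · filter_upwards with x
    unfold costF
    refine Continuous.rpow_const ?_ fun θ => Or.inr hp
    refine continuous_ciSup_fin fun i => continuous_ciSup_fin fun j => ?_
    exact ((continuous_subtype_val.inner continuous_const).sub
      (continuous_subtype_val.inner continuous_const)).abs

lemma smwtheta_nonneg (p : ℝ) (ν : Fin (n + 1) → Measure (Rd d))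
    (θ : sphere (0 : Rd d) 1) : 0 ≤ SMWtheta p ν θ :=
  Real.sInf_nonneg (smwtheta_bddBelow p θ)

lemma smwtheta_measurable (hp : 0 ≤ p) {ν : Fin (n + 1) → Measure (Rd d)}
    (hν : ∀ i, IsProbabilityMeasure (ν i)) (hνm : ∀ i, FiniteMoment p (ν i)) :
    Measurable (SMWtheta p ν) := by
  have husc : UpperSemicontinuous (SMWtheta p ν) := by
    intro θ y hy
    rw [SMWtheta] at hy
    obtain ⟨z, ⟨pl, hpl, rfl⟩, hz⟩ :=
      exists_lt_of_csInf_lt ((mcoupling_nonempty hν).image _) hy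
    have hcont := cost_integral_continuous hp hνm hpl
    have hz' : (∫ x, costF p θ x ∂pl) < y := hz
    filter_upwards [(isOpen_lt hcont continuous_const).mem_nhds hz'] with θ' hθ'
    calc SMWtheta p ν θ' ≤ ∫ x, costF p θ' x ∂pl :=
          csInf_le ⟨0, smwtheta_bddBelow p θ'⟩ ⟨pl, hpl, rfl⟩
      _ < y := hθ'
  exact husc.measurable

lemma smwtheta_le_const (hp : 0 ≤ p) {ν : Fin (n + 1) → Measure (Rd d)}
    (hν : ∀ i, IsProbabilityMeasure (ν i)) (hνm : ∀ i, FiniteMoment p (ν i))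
    (θ : sphere (0 : Rd d) 1) :
    SMWtheta p ν θ ≤
      ∫ x, (2 : ℝ) ^ p * ∑ i, ‖x i‖ ^ p ∂(Measure.pi ν) := by
  haveI := hν
  have hpl0 : Measure.pi ν ∈ MCoupling ν := ⟨inferInstance, pi_map_eval hν⟩
  refine le_trans (csInf_le ⟨0, smwtheta_bddBelow p θ⟩ ⟨Measure.pi ν, hpl0, rfl⟩) ?_
  refine integral_mono_of_nonneg ?_ ((integrable_sum_norm_rpow hνm hpl0).const_mul _) ?_
  · filter_upwards with x
    exact costF_nonneg θ x
  · filter_upwards with x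
    exact costF_le hp θ x

end AuxLemmas


/-- The sliced multi-marginal Wasserstein cost (with maximal ground metric) of
`(μ₁, μ_2, …, μ_{K+1})` dominates the us-MFSWB objective
`USF(μ₁; μ_{2:K+1}) = ∫ max_k W_p^p(θ♯μ₁, θ♯μ_k) dσ(θ)`.
Here `μs : Fin K → Measure (Rd d)` lists the marginals `μ_2, …, μ_{K+1}` (`K ≥ 1`,
so there are at least two marginals in total). -/
theorem smw_ge_usf (p : ℝ) (hp : 1 ≤ p) (d : ℕ) (hd : 1 ≤ d)
    (K : ℕ) (hK : 1 ≤ K) (μ₁ : Measure (Rd d)) (μs : Fin K → Measure (Rd d))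
    (hμ₁ : IsProbabilityMeasure μ₁) (hμ₁m : FiniteMoment p μ₁)
    (hμs : ∀ k, IsProbabilityMeasure (μs k)) (hμsm : ∀ k, FiniteMoment p (μs k))
    (hmeas : Measurable fun θ : sphere (0 : Rd d) 1 =>
      ⨆ k, Wpp p (proj θ μ₁) (proj θ (μs k))) :
    ∫ θ, (⨆ k, Wpp p (proj θ μ₁) (proj θ (μs k))) ∂(uniformSphere d) ≤
      SMWpp p (Fin.cons μ₁ μs) := by
  have hp0 : 0 ≤ p := le_trans zero_le_one hp
  haveI : Nonempty (Fin K) := ⟨⟨0, hK⟩⟩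
  set ν : Fin (K + 1) → Measure (Rd d) := Fin.cons μ₁ μs with hνdef
  have hν : ∀ i, IsProbabilityMeasure (ν i) := by
    intro i
    induction i using Fin.cases with
    | zero => rw [hνdef, Fin.cons_zero]; exact hμ₁
    | succ k => rw [hνdef, Fin.cons_succ]; exact hμs k
  have hνm : ∀ i, FiniteMoment p (ν i) := by
    intro i
    induction i using Fin.cases with
    | zero => rw [hνdef, Fin.cons_zero]; exact hμ₁m
    | succ k => rw [hνdef, Fin.cons_succ]; exact hμsm k
  haveI := hν
  have hpl0 : Measure.pi ν ∈ MCoupling ν :=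
    ⟨inferInstance, pi_map_eval hν⟩
  set C : ℝ := ∫ x, (2 : ℝ) ^ p * ∑ i, ‖x i‖ ^ p ∂(Measure.pi ν) with hC
  have hkey : ∀ θ : sphere (0 : Rd d) 1,
      (⨆ k, Wpp p (proj θ μ₁) (proj θ (μs k))) ≤ SMWtheta p ν θ := by
    intro θ
    rw [SMWtheta]
    refine le_csInf ((mcoupling_nonempty hν).image _) ?_
    rintro z ⟨pl, hpl, rfl⟩
    refine ciSup_le fun k => ?_
    have h := wpp_le_cost hp hνm hpl θ 0 k.succ
    rw [hνdef, Fin.cons_zero, Fin.cons_succ] at h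
    exact h
  have hsmw_le : ∀ θ : sphere (0 : Rd d) 1, SMWtheta p ν θ ≤ C :=
    fun θ => smwtheta_le_const hp0 hν hνm θ
  haveI hfin : IsFiniteMeasure (uniformSphere d) := by
    constructor
    rw [uniformSphere, Measure.smul_apply, smul_eq_mul]
    exact lt_of_le_of_lt (ENNReal.inv_mul_le_one _) ENNReal.one_lt_top
  have hFnonneg : ∀ θ : sphere (0 : Rd d) 1,
      0 ≤ ⨆ k, Wpp p (proj θ μ₁) (proj θ (μs k)) :=
    fun θ => Real.iSup_nonneg fun k => wpp_nonneg p _ _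
  have hFint : Integrable (fun θ : sphere (0 : Rd d) 1 =>
      ⨆ k, Wpp p (proj θ μ₁) (proj θ (μs k))) (uniformSphere d) := by
    refine ⟨hmeas.aestronglyMeasurable, HasFiniteIntegral.of_bounded (C := C) ?_⟩
    filter_upwards with θ
    rw [Real.norm_eq_abs, abs_of_nonneg (hFnonneg θ)]
    exact le_trans (hkey θ) (hsmw_le θ)
  have hSint : Integrable (SMWtheta p ν) (uniformSphere d) := by
    refine ⟨(smwtheta_measurable hp0 hν hνm).aestronglyMeasurable,
      HasFiniteIntegral.of_bounded (C := C) ?_⟩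
    filter_upwards with θ
    rw [Real.norm_eq_abs, abs_of_nonneg (smwtheta_nonneg p _ θ)]
    exact hsmw_le θ
  exact integral_mono hFint hSint hkey
end
end

section
/- Let p ≥ 1, d ≥ 1, K ≥ 2, and let μ_2, …, μ_K be probability measures on ℝ^d with finite p-th moments. Then, taking the infimum over all probability measures μ_1 on ℝ^d with finite p-th moment, inf_{μ_1} SF(μ_1; μ_{2:K}) ≤ inf_{μ_1} SMW_p^p(μ_1, μ_2, …, μ_K; c), where SF(μ_1; μ_{2:K}) := max_{2≤k≤K} SW_p^p(μ_1, μ_k): the optimal value of the s-MFSWB objective is a lower bound for the optimal value of the sliced multi-marginal Wasserstein cost with the maximal ground metric, minimized over the first marginal. -/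
open MeasureTheory Metric Real

noncomputable section

set_option maxHeartbeats 2000000

/-! ### Auxiliary lemmas -/

lemma myrpow_cont {p : ℝ} (hp : 0 < p) : Continuous fun t : ℝ => t ^ p := by
  rw [continuous_iff_continuousAt]
  exact fun t => Real.continuousAt_rpow_const t p (Or.inr hp.le)

lemma my_add_rpow {p : ℝ} (hp : 1 ≤ p) {a b : ℝ} (ha : 0 ≤ a) (hb : 0 ≤ b) :
    (a + b) ^ p ≤ 2 ^ p * (a ^ p + b ^ p) := by
  have hp0 : (0:ℝ) ≤ p := by linarith
  have h1 : a + b ≤ 2 * max a b := by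
    rcases le_total a b with h | h
    · rw [max_eq_right h]; linarith
    · rw [max_eq_left h]; linarith
  calc (a + b) ^ p ≤ (2 * max a b) ^ p :=
        Real.rpow_le_rpow (by positivity) h1 hp0
    _ = 2 ^ p * (max a b) ^ p := Real.mul_rpow (by norm_num) (le_max_iff.2 (Or.inl ha))
    _ ≤ 2 ^ p * (a ^ p + b ^ p) := by
        have h2 : (0:ℝ) ≤ 2 ^ p := Real.rpow_nonneg (by norm_num) p
        have h3 : (max a b) ^ p ≤ a ^ p + b ^ p := by
          rcases le_total a b with h | h
          · rw [max_eq_right h]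
            have := Real.rpow_nonneg ha p; linarith
          · rw [max_eq_left h]
            have := Real.rpow_nonneg hb p; linarith
        exact mul_le_mul_of_nonneg_left h3 h2

lemma my_sum_rpow {p : ℝ} (hp : 1 ≤ p) {ι : Type*} [DecidableEq ι] (s : Finset ι) :
    ∃ C : ℝ, 1 ≤ C ∧ ∀ a : ι → ℝ, (∀ i, 0 ≤ a i) →
      (∑ i ∈ s, a i) ^ p ≤ C * ∑ i ∈ s, a i ^ p := by
  induction s using Finset.induction with
  | empty =>
      exact ⟨1, le_rfl, fun a ha => by
        simp [Real.zero_rpow (by linarith : p ≠ 0)]⟩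
  | @insert i s' hi ih =>
      obtain ⟨C, hC1, hC⟩ := ih
      have h2p : (1:ℝ) ≤ 2 ^ p := Real.one_le_rpow (by norm_num) (by linarith)
      refine ⟨2 ^ p * C, one_le_mul_of_one_le_of_one_le h2p hC1, fun a ha => ?_⟩
      rw [Finset.sum_insert hi, Finset.sum_insert hi]
      have hs0 : (0:ℝ) ≤ ∑ j ∈ s', a j := Finset.sum_nonneg fun j _ => ha j
      have hT0 : (0:ℝ) ≤ ∑ j ∈ s', a j ^ p :=
        Finset.sum_nonneg fun j _ => Real.rpow_nonneg (ha j) p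
      have h1 := my_add_rpow hp (ha i) hs0
      have h2 := hC a ha
      have hai : (0:ℝ) ≤ a i ^ p := Real.rpow_nonneg (ha i) p
      have h2p0 : (0:ℝ) ≤ 2 ^ p := by linarith
      nlinarith [mul_le_mul_of_nonneg_left h2 h2p0,
        mul_le_mul_of_nonneg_right (sub_nonneg.2 hC1) hai,
        mul_le_mul_of_nonneg_left (mul_le_mul_of_nonneg_right (sub_nonneg.2 hC1) hai) h2p0]

section Sup

variable {n : ℕ}

lemma mysup_eq (t : Fin (n+1) → ℝ) :
    (⨆ i, ⨆ j, |t i - t j|) =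
      Finset.univ.sup' Finset.univ_nonempty
        (fun i : Fin (n+1) => Finset.univ.sup' Finset.univ_nonempty
          (fun j : Fin (n+1) => |t i - t j|)) := by
  have h : ∀ i : Fin (n+1), (⨆ j, |t i - t j|) =
      Finset.univ.sup' Finset.univ_nonempty (fun j : Fin (n+1) => |t i - t j|) :=
    fun i => (Finset.sup'_univ_eq_ciSup _).symm
  simp_rw [h]
  exact (Finset.sup'_univ_eq_ciSup _).symm

lemma my_le_sup (t : Fin (n+1) → ℝ) (i j : Fin (n+1)) :
    |t i - t j| ≤ ⨆ i, ⨆ j, |t i - t j| := by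
  rw [mysup_eq]
  exact le_trans (Finset.le_sup' (fun j => |t i - t j|) (Finset.mem_univ j))
    (Finset.le_sup' (fun i => Finset.univ.sup' Finset.univ_nonempty
      (fun j : Fin (n+1) => |t i - t j|)) (Finset.mem_univ i))

lemma mysup_nonneg (t : Fin (n+1) → ℝ) : 0 ≤ ⨆ i, ⨆ j, |t i - t j| :=
  le_trans (abs_nonneg _) (my_le_sup t 0 0)

lemma mysup_le (t : Fin (n+1) → ℝ) {c : ℝ} (h : ∀ i j, |t i - t j| ≤ c) :
    (⨆ i, ⨆ j, |t i - t j|) ≤ c := by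
  rw [mysup_eq]
  exact Finset.sup'_le _ _ fun i _ => Finset.sup'_le _ _ fun j _ => h i j

lemma mysup_cont {X : Type*} [TopologicalSpace X] (g : X → Fin (n+1) → ℝ)
    (hg : ∀ i, Continuous fun x => g x i) :
    Continuous fun x => ⨆ i, ⨆ j, |g x i - g x j| := by
  have h : ∀ x, (⨆ i, ⨆ j, |g x i - g x j|) =
      Finset.univ.sup' Finset.univ_nonempty
        (fun i : Fin (n+1) => Finset.univ.sup' Finset.univ_nonempty
          (fun j : Fin (n+1) => |g x i - g x j|)) := fun x => mysup_eq _
  simp_rw [h]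
  refine Continuous.finset_sup'_apply _ fun i _ => ?_
  exact Continuous.finset_sup'_apply _ fun j _ => ((hg i).sub (hg j)).abs

end Sup

lemma my_pi_map_eval {δ : Type*} [Fintype δ] [DecidableEq δ] {α : δ → Type*}
    [∀ i, MeasurableSpace (α i)] (μ : ∀ i, Measure (α i))
    [∀ i, IsProbabilityMeasure (μ i)] (i : δ) :
    (Measure.pi μ).map (fun x => x i) = μ i := by
  ext s hs
  rw [Measure.map_apply (measurable_pi_apply i) hs]
  have h : (fun x : ∀ j, α j => x i) ⁻¹' s =
      Set.pi Set.univ (Function.update (fun j => (Set.univ : Set (α j))) i s) := by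
    ext x
    simp only [Set.mem_preimage, Set.mem_pi, Set.mem_univ, true_implies]
    constructor
    · intro hx j
      rcases eq_or_ne j i with rfl | hj
      · simpa using hx
      · simp [Function.update_of_ne hj]
    · intro hx
      have := hx i
      simpa using this
  rw [h, Measure.pi_pi]
  rw [Finset.prod_eq_single i (fun j _ hj => by simp [Function.update_of_ne hj])
    (fun hi => absurd (Finset.mem_univ i) hi)]
  simp

instance uniformSphere_finite (d : ℕ) : IsFiniteMeasure (uniformSphere d) := by
  constructor
  rw [uniformSphere, Measure.smul_apply, smul_eq_mul]
  set m := (volume : Measure (Rd d)).toSphere Set.univ with hm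
  rcases eq_or_ne m 0 with h0 | h0
  · simp [h0]
  · rcases eq_or_ne m ⊤ with h1 | h1
    · simp [h1]
    · rw [ENNReal.inv_mul_cancel h0 h1]
      exact ENNReal.one_lt_top

/-- The key lemma: the sliced Wasserstein cost between the `0`-th and `j`-th marginal
is at most the sliced multimarginal cost. -/
lemma my_key {p : ℝ} (hp : 1 ≤ p) {d K : ℕ} (ν : Fin (K+1) → Measure (Rd d))
    (hν : ∀ i, IsProbabilityMeasure (ν i)) (hνm : ∀ i, FiniteMoment p (ν i))
    (j : Fin (K+1)) :
    SWpp p (ν 0) (ν j) ≤ SMWpp p ν := by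
  classical
  have hp0 : (0:ℝ) < p := lt_of_lt_of_le one_pos hp
  have contp : Continuous fun t : ℝ => t ^ p := myrpow_cont hp0
  haveI : ∀ i, IsProbabilityMeasure (ν i) := hν
  -- notation
  set S : (sphere (0 : Rd d) 1) → (Fin (K+1) → Rd d) → ℝ :=
    fun θ x => ⨆ i, ⨆ j, |inner ℝ (θ : Rd d) (x i) - inner ℝ (θ : Rd d) (x j)| with hS
  set hmax : (sphere (0 : Rd d) 1) → (Fin (K+1) → Rd d) → ℝ :=
    fun θ x => (S θ x) ^ p with hhmax
  obtain ⟨C, hC1, hC⟩ := my_sum_rpow hp (Finset.univ : Finset (Fin (K+1)))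
  set D : (Fin (K+1) → Rd d) → ℝ := fun x => (C * 2 ^ p) * ∑ i, ‖x i‖ ^ p with hD
  have h2p0 : (0:ℝ) ≤ 2 ^ p := Real.rpow_nonneg (by norm_num) p
  have normθ : ∀ θ : sphere (0 : Rd d) 1, ‖(θ : Rd d)‖ = 1 :=
    fun θ => mem_sphere_zero_iff_norm.mp θ.2
  have hinner : ∀ (θ : sphere (0 : Rd d) 1) (y : Rd d),
      |inner ℝ (θ : Rd d) y| ≤ ‖y‖ := by
    intro θ y
    calc |inner ℝ (θ : Rd d) y| ≤ ‖(θ : Rd d)‖ * ‖y‖ := abs_real_inner_le_norm _ _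
      _ = ‖y‖ := by rw [normθ θ, one_mul]
  have hSnonneg : ∀ θ x, 0 ≤ S θ x := fun θ x => mysup_nonneg _
  have hmax_nonneg : ∀ θ x, 0 ≤ hmax θ x := fun θ x => Real.rpow_nonneg (hSnonneg θ x) p
  -- bound on hmax
  have boundhmax : ∀ θ x, hmax θ x ≤ D x := by
    intro θ x
    have hSle : S θ x ≤ ∑ i, 2 * ‖x i‖ := by
      refine mysup_le _ fun i j' => ?_
      have h1 : |inner ℝ (θ : Rd d) (x i) - inner ℝ (θ : Rd d) (x j')| ≤ ‖x i‖ + ‖x j'‖ :=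
        (abs_sub _ _).trans (add_le_add (hinner θ (x i)) (hinner θ (x j')))
      have h2 : ‖x i‖ ≤ ∑ l, ‖x l‖ :=
        Finset.single_le_sum (fun l _ => norm_nonneg (x l)) (Finset.mem_univ i)
      have h3 : ‖x j'‖ ≤ ∑ l, ‖x l‖ :=
        Finset.single_le_sum (fun l _ => norm_nonneg (x l)) (Finset.mem_univ j')
      have h4 : (∑ i, 2 * ‖x i‖) = 2 * ∑ l, ‖x l‖ := by
        rw [Finset.mul_sum]
      rw [h4]; linarith
    have h5 : hmax θ x ≤ (∑ i, 2 * ‖x i‖) ^ p :=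
      Real.rpow_le_rpow (hSnonneg θ x) hSle hp0.le
    have h6 : (∑ i, 2 * ‖x i‖) ^ p ≤ C * ∑ i, (2 * ‖x i‖) ^ p :=
      hC _ fun i => by positivity
    have h7 : (∑ i, (2 * ‖x i‖) ^ p) = 2 ^ p * ∑ i, ‖x i‖ ^ p := by
      rw [Finset.mul_sum]
      exact Finset.sum_congr rfl fun i _ =>
        Real.mul_rpow (by norm_num) (norm_nonneg _)
    calc hmax θ x ≤ C * ∑ i, (2 * ‖x i‖) ^ p := h5.trans h6
      _ = D x := by rw [h7, hD]; ring
  -- continuity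
  have contS_x : ∀ θ, Continuous (S θ) := by
    intro θ
    have h := mysup_cont (n := K) (X := Fin (K+1) → Rd d)
      (fun x i => (inner ℝ (θ : Rd d) (x i) : ℝ))
      (fun i => Continuous.inner continuous_const (continuous_apply i))
    exact h
  have contHmaxX : ∀ θ, Continuous (hmax θ) := fun θ => contp.comp (contS_x θ)
  have contHmaxθ : ∀ x, Continuous fun θ => hmax θ x := by
    intro x
    refine contp.comp ?_
    have h := mysup_cont (n := K) (X := sphere (0 : Rd d) 1)
      (fun (θ : sphere (0 : Rd d) 1) i => (inner ℝ (θ : Rd d) (x i) : ℝ))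
      (fun i => Continuous.inner continuous_subtype_val continuous_const)
    exact h
  -- integrability of D and hmax w.r.t. a multicoupling
  have contnorm : Continuous fun y : Rd d => ‖y‖ ^ p := contp.comp continuous_norm
  have moment : ∀ pl ∈ MCoupling ν, ∀ i, Integrable (fun x => ‖x i‖ ^ p) pl := by
    intro pl hpl i
    have h1 : Integrable (fun y : Rd d => ‖y‖ ^ p) (pl.map (fun x => x i)) := by
      rw [hpl.2 i]; exact hνm i
    rw [integrable_map_measure contnorm.aestronglyMeasurable
      (measurable_pi_apply i).aemeasurable] at h1
    exact h1
  have ID : ∀ pl ∈ MCoupling ν, Integrable D pl := by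
    intro pl hpl
    exact ((integrable_finset_sum _ fun i _ => moment pl hpl i).const_mul _)
  have Ihmax : ∀ pl ∈ MCoupling ν, ∀ θ, Integrable (hmax θ) pl := by
    intro pl hpl θ
    refine (ID pl hpl).mono' (contHmaxX θ).aestronglyMeasurable (ae_of_all _ fun x => ?_)
    rw [Real.norm_eq_abs, abs_of_nonneg (hmax_nonneg θ x)]
    exact boundhmax θ x
  -- the product coupling
  set pl0 : Measure (Fin (K+1) → Rd d) := Measure.pi ν with hpl0def
  have hpl0 : pl0 ∈ MCoupling ν := by
    constructor
    · infer_instance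
    · exact fun k => my_pi_map_eval ν k
  -- basic facts about SMWtheta
  have cost_nonneg : ∀ (θ : sphere (0 : Rd d) 1) (b : ℝ),
      b ∈ ((fun pl : Measure (Fin (K+1) → Rd d) =>
        ∫ x, (⨆ i, ⨆ j, |inner ℝ (θ : Rd d) (x i) - inner ℝ (θ : Rd d) (x j)|) ^ p ∂pl)
        '' MCoupling ν) → 0 ≤ b := by
    rintro θ b ⟨pl, hpl, rfl⟩
    exact integral_nonneg fun x => hmax_nonneg θ x
  have gnonneg : ∀ θ, 0 ≤ SMWtheta p ν θ := fun θ =>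
    Real.sInf_nonneg (cost_nonneg θ)
  have gle : ∀ θ, ∀ pl ∈ MCoupling ν, SMWtheta p ν θ ≤ ∫ x, hmax θ x ∂pl := by
    intro θ pl hpl
    exact csInf_le ⟨0, fun b hb => cost_nonneg θ b hb⟩ ⟨pl, hpl, rfl⟩
  -- continuity of the cost of a fixed coupling in θ
  have Fcont : ∀ pl ∈ MCoupling ν, Continuous fun θ => ∫ x, hmax θ x ∂pl := by
    intro pl hpl
    refine continuous_of_dominated (fun θ => (contHmaxX θ).aestronglyMeasurable)
      (fun θ => ae_of_all _ fun x => ?_) (ID pl hpl) (ae_of_all _ fun x => contHmaxθ x)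
    rw [Real.norm_eq_abs, abs_of_nonneg (hmax_nonneg θ x)]
    exact boundhmax θ x
  -- upper semicontinuity and hence measurability of SMWtheta
  have gusc : UpperSemicontinuous (SMWtheta p ν) := by
    intro θ₀ y hy
    have hne : ((fun pl : Measure (Fin (K+1) → Rd d) =>
        ∫ x, (⨆ i, ⨆ j, |(inner ℝ (θ₀ : Rd d) (x i) : ℝ) - inner ℝ (θ₀ : Rd d) (x j)|) ^ p ∂pl)
        '' MCoupling ν).Nonempty := ⟨_, pl0, hpl0, rfl⟩
    obtain ⟨b, ⟨pl, hpl, rfl⟩, hb⟩ := exists_lt_of_csInf_lt hne hy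
    have hev : ∀ᶠ θ in nhds θ₀, (∫ x, hmax θ x ∂pl) < y :=
      Filter.Tendsto.eventually_lt_const hb ((Fcont pl hpl).tendsto θ₀)
    filter_upwards [hev] with θ hθ
    exact lt_of_le_of_lt (gle θ pl hpl) hθ
  have gmeas : Measurable (SMWtheta p ν) := gusc.measurable
  -- integrability of SMWtheta
  set Cg : ℝ := ∫ x, D x ∂pl0 with hCg
  have gbound : ∀ θ, SMWtheta p ν θ ≤ Cg := by
    intro θ
    refine (gle θ pl0 hpl0).trans ?_
    exact integral_mono_of_nonneg (ae_of_all _ fun x => hmax_nonneg θ x) (ID pl0 hpl0)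
      (ae_of_all _ fun x => boundhmax θ x)
  have Ig : Integrable (SMWtheta p ν) (uniformSphere d) := by
    refine (integrable_const Cg).mono' gmeas.aestronglyMeasurable
      (ae_of_all _ fun θ => ?_)
    rw [Real.norm_eq_abs, abs_of_nonneg (gnonneg θ)]
    exact gbound θ
  -- pointwise comparison Wpp ≤ SMWtheta
  have Wnonneg : ∀ (θ : sphere (0 : Rd d) 1) (b : ℝ),
      b ∈ ((fun γ : Measure (ℝ × ℝ) => ∫ q, |q.1 - q.2| ^ p ∂γ) ''
        Coupling (proj θ (ν 0)) (proj θ (ν j))) → 0 ≤ b := by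
    rintro θ b ⟨γ, hγ, rfl⟩
    exact integral_nonneg fun q => Real.rpow_nonneg (abs_nonneg _) p
  have pointwise : ∀ θ, Wpp p (proj θ (ν 0)) (proj θ (ν j)) ≤ SMWtheta p ν θ := by
    intro θ
    refine le_csInf ⟨_, pl0, hpl0, rfl⟩ ?_
    rintro b ⟨pl, hpl, rfl⟩
    haveI := hpl.1
    set h : (Fin (K+1) → Rd d) → ℝ × ℝ :=
      fun x => (inner ℝ (θ : Rd d) (x 0), inner ℝ (θ : Rd d) (x j)) with hhdef
    have hmeas : Measurable h := by
      refine Measurable.prod ?_ ?_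
      · exact (Continuous.inner continuous_const (continuous_apply 0)).measurable
      · exact (Continuous.inner continuous_const (continuous_apply j)).measurable
    have hinnermeas : Measurable fun y : Rd d => (inner ℝ (θ : Rd d) y : ℝ) :=
      (Continuous.inner continuous_const continuous_id).measurable
    have hγmem : pl.map h ∈ Coupling (proj θ (ν 0)) (proj θ (ν j)) := by
      refine ⟨Measure.isProbabilityMeasure_map hmeas.aemeasurable, ?_, ?_⟩
      · rw [Measure.map_map measurable_fst hmeas]
        have : (Prod.fst ∘ h) = (fun y : Rd d => (inner ℝ (θ : Rd d) y : ℝ)) ∘ (fun x => x 0) := rfl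
        rw [this, ← Measure.map_map hinnermeas (measurable_pi_apply 0), hpl.2 0]
        rfl
      · rw [Measure.map_map measurable_snd hmeas]
        have : (Prod.snd ∘ h) = (fun y : Rd d => (inner ℝ (θ : Rd d) y : ℝ)) ∘ (fun x => x j) := rfl
        rw [this, ← Measure.map_map hinnermeas (measurable_pi_apply j), hpl.2 j]
        rfl
    have contcost : Continuous fun q : ℝ × ℝ => |q.1 - q.2| ^ p :=
      contp.comp ((continuous_fst.sub continuous_snd).abs)
    have costeq : (∫ q, |q.1 - q.2| ^ p ∂(pl.map h)) =
        ∫ x, |inner ℝ (θ : Rd d) (x 0) - inner ℝ (θ : Rd d) (x j)| ^ p ∂pl := by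
      rw [integral_map hmeas.aemeasurable contcost.aestronglyMeasurable]
    have hle1 : Wpp p (proj θ (ν 0)) (proj θ (ν j)) ≤ ∫ q, |q.1 - q.2| ^ p ∂(pl.map h) :=
      csInf_le ⟨0, fun b hb => Wnonneg θ b hb⟩ ⟨pl.map h, hγmem, rfl⟩
    have hle2 : (∫ x, |inner ℝ (θ : Rd d) (x 0) - inner ℝ (θ : Rd d) (x j)| ^ p ∂pl) ≤
        ∫ x, hmax θ x ∂pl := by
      refine integral_mono_of_nonneg
        (ae_of_all _ fun x => Real.rpow_nonneg (abs_nonneg _) p)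
        (Ihmax pl hpl θ) (ae_of_all _ fun x => ?_)
      exact Real.rpow_le_rpow (abs_nonneg _)
        (my_le_sup (fun i => inner ℝ (θ : Rd d) (x i)) 0 j) hp0.le
    calc Wpp p (proj θ (ν 0)) (proj θ (ν j)) ≤ ∫ q, |q.1 - q.2| ^ p ∂(pl.map h) := hle1
      _ = _ := costeq
      _ ≤ ∫ x, hmax θ x ∂pl := hle2
  -- conclude by monotonicity of the integral
  have Wnn : ∀ θ, 0 ≤ Wpp p (proj θ (ν 0)) (proj θ (ν j)) := fun θ =>
    Real.sInf_nonneg (Wnonneg θ)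
  exact integral_mono_of_nonneg (ae_of_all _ Wnn) Ig (ae_of_all _ pointwise)

/-- **Corollary.** Minimizing the s-MFSWB objective `SF(μ₁; μ_{2:K+1}) =
max_k SW_p^p(μ₁, μ_k)` over the barycenter is minimizing a lower bound of the
sliced multi-marginal Wasserstein cost with the maximal ground metric:
`inf_{μ₁} SF(μ₁; μ_{2:K+1}) ≤ inf_{μ₁} SMW_p^p(μ₁, μ_2, …, μ_{K+1}; c)`,
the infima ranging over probability measures `μ₁` with finite `p`-th moment.
Here `μs : Fin K → Measure (Rd d)` lists the marginals `μ_2, …, μ_{K+1}` (`K ≥ 1`). -/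
theorem sf_inf_le_smw_inf (p : ℝ) (hp : 1 ≤ p) (d : ℕ) (hd : 1 ≤ d)
    (K : ℕ) (hK : 1 ≤ K) (μs : Fin K → Measure (Rd d))
    (hμs : ∀ k, IsProbabilityMeasure (μs k)) (hμsm : ∀ k, FiniteMoment p (μs k)) :
    sInf ((fun μ₁ : Measure (Rd d) => ⨆ k, SWpp p μ₁ (μs k)) ''
      {μ₁ | IsProbabilityMeasure μ₁ ∧ FiniteMoment p μ₁}) ≤
    sInf ((fun μ₁ : Measure (Rd d) => SMWpp p (Fin.cons μ₁ μs)) ''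
      {μ₁ | IsProbabilityMeasure μ₁ ∧ FiniteMoment p μ₁}) := by
  classical
  haveI : Nonempty (Fin K) := Fin.pos_iff_nonempty.mp hK
  set k0 : Fin K := Classical.arbitrary (Fin K) with hk0
  have SWnn : ∀ (μ₁ μ₂ : Measure (Rd d)), 0 ≤ SWpp p μ₁ μ₂ := by
    intro μ₁ μ₂
    refine integral_nonneg fun θ => ?_
    refine Real.sInf_nonneg ?_
    rintro b ⟨γ, hγ, rfl⟩
    exact integral_nonneg fun q => Real.rpow_nonneg (abs_nonneg _) p
  have hbdd : BddBelow ((fun μ₁ : Measure (Rd d) => ⨆ k, SWpp p μ₁ (μs k)) ''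
      {μ₁ | IsProbabilityMeasure μ₁ ∧ FiniteMoment p μ₁}) := by
    refine ⟨0, ?_⟩
    rintro b ⟨μ₁, hμ₁, rfl⟩
    show (0:ℝ) ≤ ⨆ k, SWpp p μ₁ (μs k)
    exact le_trans (SWnn μ₁ (μs k0))
      (le_ciSup (f := fun k => SWpp p μ₁ (μs k))
        (Set.Finite.bddAbove (Set.finite_range _)) k0)
  have hmem0 : (μs k0) ∈ {μ₁ : Measure (Rd d) | IsProbabilityMeasure μ₁ ∧ FiniteMoment p μ₁} :=
    ⟨hμs k0, hμsm k0⟩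
  refine le_csInf ⟨_, Set.mem_image_of_mem _ hmem0⟩ ?_
  rintro b ⟨μ₁, ⟨hμ₁, hμ₁m⟩, rfl⟩
  refine le_trans (csInf_le hbdd (Set.mem_image_of_mem _ ⟨hμ₁, hμ₁m⟩)) ?_
  refine ciSup_le fun k => ?_
  have hν : ∀ i, IsProbabilityMeasure ((Fin.cons μ₁ μs : Fin (K+1) → Measure (Rd d)) i) := by
    intro i
    refine Fin.cases ?_ ?_ i
    · simpa using hμ₁
    · intro k'
      simpa using hμs k'
  have hνm : ∀ i, FiniteMoment p ((Fin.cons μ₁ μs : Fin (K+1) → Measure (Rd d)) i) := by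
    intro i
    refine Fin.cases ?_ ?_ i
    · simpa using hμ₁m
    · intro k'
      simpa using hμsm k'
  have hkey := my_key hp (Fin.cons μ₁ μs) hν hνm k.succ
  simpa using hkey


end
end

section
/- Let p ≥ 1, d ≥ 1, K ≥ 2, and let μ, μ_1, …, μ_K be probability measures on ℝ^d with finite p-th moments. Set g(θ) := max_{1≤k≤K} W_p^p(θ♯μ, θ♯μ_k), assumed measurable, with each θ ↦ W_p^p(θ♯μ, θ♯μ_k), g, and g·exp(g) σ-integrable on S^{d−1}. Then SF(μ; μ_{1:K}) ≤ ESF(μ; μ_{1:K}), i.e., max_{1≤k≤K} ∫_{S^{d−1}} W_p^p(θ♯μ, θ♯μ_k) dσ(θ) ≤ (∫_{S^{d−1}} g(θ) exp(g(θ)) dσ(θ)) / (∫_{S^{d−1}} exp(g(θ)) dσ(θ)). -/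
open MeasureTheory Metric Real

noncomputable section

lemma exp_comp_integrable {α : Type*} [MeasurableSpace α] (σ : Measure α)
    [IsProbabilityMeasure σ] (g : α → ℝ) (hgmeas : Measurable g)
    (hgeint : Integrable (fun θ => g θ * Real.exp (g θ)) σ) :
    Integrable (fun θ => Real.exp (g θ)) σ := by
  have hb : Integrable (fun θ => Real.exp 1 + |g θ * Real.exp (g θ)|) σ :=
    (integrable_const (Real.exp 1)).add hgeint.abs
  refine Integrable.mono' hb (hgmeas.exp.aestronglyMeasurable)
    (Filter.Eventually.of_forall fun θ => ?_)
  rw [Real.norm_eq_abs, abs_of_pos (Real.exp_pos _)]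
  rcases le_total (g θ) 1 with h | h
  · have := Real.exp_le_exp.mpr h
    have := abs_nonneg (g θ * Real.exp (g θ))
    linarith
  · have h1 : Real.exp (g θ) ≤ g θ * Real.exp (g θ) := by
      nlinarith [Real.exp_pos (g θ)]
    have h2 : g θ * Real.exp (g θ) ≤ |g θ * Real.exp (g θ)| := le_abs_self _
    have := Real.exp_pos (1:ℝ)
    linarith

lemma cheb {α : Type*} [MeasurableSpace α] (σ : Measure α)
    [IsProbabilityMeasure σ] (g : α → ℝ) (hgmeas : Measurable g)
    (hgint : Integrable g σ)
    (hgeint : Integrable (fun θ => g θ * Real.exp (g θ)) σ) :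
    (∫ θ, g θ ∂σ) * (∫ θ, Real.exp (g θ) ∂σ) ≤ ∫ θ, g θ * Real.exp (g θ) ∂σ := by
  have heint := exp_comp_integrable σ g hgmeas hgeint
  set P := σ.prod σ with hP
  have i1 : Integrable (fun z : α × α => g z.1 * Real.exp (g z.1)) P := by
    simpa using hgeint.mul_prod (integrable_const (1:ℝ))
  have i2 : Integrable (fun z : α × α => g z.1 * Real.exp (g z.2)) P :=
    hgint.mul_prod heint
  have i3 : Integrable (fun z : α × α => g z.2 * Real.exp (g z.1)) P := by
    have := heint.mul_prod hgint
    simpa [mul_comm] using this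
  have i4 : Integrable (fun z : α × α => g z.2 * Real.exp (g z.2)) P := by
    simpa using (integrable_const (1:ℝ)).mul_prod hgeint
  have hnn : 0 ≤ ∫ z, (g z.1 - g z.2) * (Real.exp (g z.1) - Real.exp (g z.2)) ∂P := by
    refine integral_nonneg fun z => ?_
    simp only [Pi.zero_apply]
    rcases le_total (g z.2) (g z.1) with h | h
    · have := Real.exp_le_exp.mpr h
      nlinarith
    · have := Real.exp_le_exp.mpr h
      nlinarith
  have hsplit : ∫ z, (g z.1 - g z.2) * (Real.exp (g z.1) - Real.exp (g z.2)) ∂P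
      = (∫ z, g z.1 * Real.exp (g z.1) ∂P) - (∫ z, g z.1 * Real.exp (g z.2) ∂P)
        - (∫ z, g z.2 * Real.exp (g z.1) ∂P) + (∫ z, g z.2 * Real.exp (g z.2) ∂P) := by
    have hfe : (fun z : α × α => (g z.1 - g z.2) * (Real.exp (g z.1) - Real.exp (g z.2)))
        = fun z : α × α => g z.1 * Real.exp (g z.1) - g z.1 * Real.exp (g z.2)
          - g z.2 * Real.exp (g z.1) + g z.2 * Real.exp (g z.2) := funext fun z => by ring
    have i12 : Integrable (fun z : α × α => g z.1 * Real.exp (g z.1) - g z.1 * Real.exp (g z.2)) P := i1.sub i2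
    have i123 : Integrable (fun z : α × α => g z.1 * Real.exp (g z.1) - g z.1 * Real.exp (g z.2)
        - g z.2 * Real.exp (g z.1)) P := i12.sub i3
    rw [hfe, integral_add i123 i4, integral_sub i12 i3, integral_sub i1 i2]
  have e1 : ∫ z, g z.1 * Real.exp (g z.1) ∂P = ∫ θ, g θ * Real.exp (g θ) ∂σ := by
    have := integral_prod_mul (μ := σ) (ν := σ) (fun θ => g θ * Real.exp (g θ)) (fun _ => (1:ℝ))
    simpa using this
  have e4 : ∫ z, g z.2 * Real.exp (g z.2) ∂P = ∫ θ, g θ * Real.exp (g θ) ∂σ := by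
    have := integral_prod_mul (μ := σ) (ν := σ) (fun _ => (1:ℝ)) (fun θ => g θ * Real.exp (g θ))
    simpa using this
  have e2 : ∫ z, g z.1 * Real.exp (g z.2) ∂P = (∫ θ, g θ ∂σ) * ∫ θ, Real.exp (g θ) ∂σ :=
    integral_prod_mul (μ := σ) (ν := σ) g (fun θ => Real.exp (g θ))
  have e3 : ∫ z, g z.2 * Real.exp (g z.1) ∂P = (∫ θ, g θ ∂σ) * ∫ θ, Real.exp (g θ) ∂σ := by
    have := integral_prod_mul (μ := σ) (ν := σ) (fun θ => Real.exp (g θ)) g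
    rw [show (fun z : α × α => g z.2 * Real.exp (g z.1)) = fun z : α × α => Real.exp (g z.1) * g z.2 by funext z; ring, this]
    ring
  rw [hsplit, e1, e2, e3, e4] at hnn
  linarith

/-- **(SF ≤ ESF).** With `g θ = max_k W_p^p(θ♯μ, θ♯μ_k)`, the s-MFSWB objective is
at most the energy-based es-MFSWB objective:
`max_k ∫ W_p^p(θ♯μ, θ♯μ_k) dσ(θ) ≤ (∫ g·exp g dσ) / (∫ exp g dσ)`. -/
theorem sf_le_esf (p : ℝ) (hp : 1 ≤ p) (d : ℕ) (hd : 1 ≤ d) (K : ℕ) (hK : 2 ≤ K)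
    (μ : Measure (Rd d)) (μs : Fin K → Measure (Rd d))
    (hμ : IsProbabilityMeasure μ) (hμs : ∀ k, IsProbabilityMeasure (μs k))
    (hμm : FiniteMoment p μ) (hμsm : ∀ k, FiniteMoment p (μs k))
    (g : sphere (0 : Rd d) 1 → ℝ)
    (hg : g = fun θ => ⨆ k, Wpp p (proj θ μ) (proj θ (μs k)))
    (hkint : ∀ k, Integrable (fun θ => Wpp p (proj θ μ) (proj θ (μs k))) (uniformSphere d))
    (hgmeas : Measurable g) (hgint : Integrable g (uniformSphere d))
    (hgeint : Integrable (fun θ => g θ * Real.exp (g θ)) (uniformSphere d)) :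
    (⨆ k, ∫ θ, Wpp p (proj θ μ) (proj θ (μs k)) ∂(uniformSphere d)) ≤
      (∫ θ, g θ * Real.exp (g θ) ∂(uniformSphere d)) /
        (∫ θ, Real.exp (g θ) ∂(uniformSphere d)) := by
  classical
  haveI : Nonempty (Fin K) := ⟨⟨0, by omega⟩⟩
  set σm := uniformSphere d with hσm
  by_cases hzero : σm = 0
  · simp only [hzero, integral_zero_measure]
    rw [ciSup_const]
    simp
  · have hprob : IsProbabilityMeasure σm := by
      set ν := (volume : Measure (Rd d)).toSphere with hν
      by_cases h0 : ν Set.univ = 0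
      · exfalso; apply hzero
        have hν0 : ν = 0 := Measure.measure_univ_eq_zero.mp h0
        rw [hσm, uniformSphere, ← hν, hν0]
        simp
      · by_cases hT : ν Set.univ = ⊤
        · exfalso; apply hzero
          rw [hσm, uniformSphere, ← hν, hT]
          simp
        · constructor
          rw [hσm, uniformSphere, ← hν, Measure.smul_apply, smul_eq_mul,
            ENNReal.inv_mul_cancel h0 hT]
    haveI := hprob
    have hge : Integrable (fun θ => Real.exp (g θ)) σm :=
      exp_comp_integrable σm g hgmeas hgeint
    have hC : 0 < ∫ θ, Real.exp (g θ) ∂σm := by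
      rw [integral_pos_iff_support_of_nonneg (fun θ => (Real.exp_pos (g θ)).le) hge]
      have hsupp : Function.support (fun θ => Real.exp (g θ)) = Set.univ :=
        Set.eq_univ_of_forall fun θ => (Real.exp_pos _).ne'
      rw [hsupp]
      simp
    have h1 : (⨆ k, ∫ θ, Wpp p (proj θ μ) (proj θ (μs k)) ∂σm) ≤ ∫ θ, g θ ∂σm := by
      refine ciSup_le fun k => ?_
      refine integral_mono (hkint k) hgint fun θ => ?_
      simp only [hg]
      exact le_ciSup ((Set.finite_range fun j => Wpp p (proj θ μ) (proj θ (μs j))).bddAbove) k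
    rw [le_div_iff₀ hC]
    calc (⨆ k, ∫ θ, Wpp p (proj θ μ) (proj θ (μs k)) ∂σm) * ∫ θ, Real.exp (g θ) ∂σm
        ≤ (∫ θ, g θ ∂σm) * ∫ θ, Real.exp (g θ) ∂σm :=
          mul_le_mul_of_nonneg_right h1 hC.le
      _ ≤ ∫ θ, g θ * Real.exp (g θ) ∂σm := cheb σm g hgmeas hgint hgeint
end
end

section
/- Let p ≥ 1, d ≥ 1, K ≥ 2, and let μ_2, …, μ_K be probability measures on ℝ^d with finite p-th moments. For a probability measure μ_1 on ℝ^d with finite p-th moment, set g_{μ_1}(θ) := max_{2≤k≤K} W_p^p(θ♯μ_1, θ♯μ_k), assumed measurable with g_{μ_1}, g_{μ_1}·exp(g_{μ_1}) and θ ↦ exp(g_{μ_1}(θ))·[inf_{π ∈ Π(μ_1,…,μ_K)} ∫ (max_{i,j}|⟨θ,x_i⟩−⟨θ,x_j⟩|)^p dπ] σ-integrable on S^{d−1}. Then, taking the infimum over all such μ_1, inf_{μ_1} ESF(μ_1; μ_{2:K}) ≤ inf_{μ_1} ESMW_p^p(μ_1, μ_2, …, μ_K; c): the optimal value of the es-MFSWB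 objective is a lower bound for the optimal value of the energy-based sliced multi-marginal Wasserstein cost with the maximal ground metric, minimized over the first marginal. -/
open MeasureTheory Metric Real

noncomputable section

lemma pi_map_eval' {ι : Type*} [Fintype ι] [DecidableEq ι] {α : ι → Type*}
    [∀ i, MeasurableSpace (α i)] (μ : ∀ i, Measure (α i))
    [∀ i, IsProbabilityMeasure (μ i)] (i : ι) :
    (Measure.pi μ).map (fun x => x i) = μ i := by
  ext s hs
  rw [Measure.map_apply (measurable_pi_apply i) hs]
  have h : (fun x : ∀ j, α j => x i) ⁻¹' s
      = Set.pi Set.univ (Function.update (fun j => (Set.univ : Set (α j))) i s) :=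
    Set.eval_preimage
  rw [h, Measure.pi_pi]
  rw [Finset.prod_eq_single_of_mem i (Finset.mem_univ i)
    (fun j _ hj => by rw [Function.update_of_ne hj]; exact measure_univ)]
  rw [Function.update_self]

lemma Wpp_nonneg (p : ℝ) (hp : 0 ≤ p) (ν₁ ν₂ : Measure ℝ) : 0 ≤ Wpp p ν₁ ν₂ := by
  apply Real.sInf_nonneg
  rintro x ⟨γ, -, rfl⟩
  exact integral_nonneg fun q => Real.rpow_nonneg (abs_nonneg _) p

lemma key_pointwise {d : ℕ} (p : ℝ) (hp : 1 ≤ p) {K : ℕ} (hK : 1 ≤ K)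
    (μs : Fin K → Measure (Rd d)) (hμs : ∀ k, IsProbabilityMeasure (μs k))
    (hμsm : ∀ k, FiniteMoment p (μs k)) (μ₁ : Measure (Rd d))
    (hμ₁ : IsProbabilityMeasure μ₁) (hμ₁m : FiniteMoment p μ₁)
    (θ : sphere (0 : Rd d) 1) :
    (⨆ k, Wpp p (proj θ μ₁) (proj θ (μs k))) ≤ SMWtheta p (Fin.cons μ₁ μs) θ := by
  have hp0 : (0:ℝ) ≤ p := le_trans zero_le_one hp
  set ν : Fin (K+1) → Measure (Rd d) := Fin.cons μ₁ μs with hν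
  haveI hνp : ∀ i, IsProbabilityMeasure (ν i) := by
    intro i
    refine Fin.cases ?_ ?_ i
    · simpa [hν] using hμ₁
    · intro k; simpa [hν] using hμs k
  have hνm : ∀ i, FiniteMoment p (ν i) := by
    intro i
    refine Fin.cases ?_ ?_ i
    · simpa [hν] using hμ₁m
    · intro k; simpa [hν] using hμsm k
  -- inner product map
  have mθ : Measurable fun y : Rd d => (inner ℝ (θ : Rd d) y : ℝ) :=
    (continuous_const.inner continuous_id).measurable
  have hθnorm : ‖(θ : Rd d)‖ = 1 := norm_eq_of_mem_sphere θ
  -- the image set defining SMWtheta is nonempty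
  have hpi : Measure.pi ν ∈ MCoupling ν := by
    refine ⟨inferInstance, fun k => pi_map_eval' ν k⟩
  have hne : ((fun pl : Measure (Fin (K+1) → Rd d) =>
      ∫ x, (⨆ i, ⨆ j, |(inner ℝ (θ : Rd d) (x i) : ℝ) - inner ℝ (θ : Rd d) (x j)|) ^ p ∂pl)
      '' MCoupling ν).Nonempty := ⟨_, ⟨_, hpi, rfl⟩⟩
  haveI : Nonempty (Fin K) := ⟨⟨0, hK⟩⟩
  refine ciSup_le fun k => ?_
  refine le_csInf hne ?_
  rintro b ⟨pl, ⟨hpl1, hpl2⟩, rfl⟩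
  -- the two-marginal projection coupling
  set T : (Fin (K+1) → Rd d) → ℝ × ℝ :=
    fun x => (inner ℝ (θ : Rd d) (x 0), inner ℝ (θ : Rd d) (x k.succ)) with hT
  have hTm : Measurable T :=
    (mθ.comp (measurable_pi_apply 0)).prodMk (mθ.comp (measurable_pi_apply k.succ))
  haveI := hpl1
  have hγmem : pl.map T ∈ Coupling (proj θ μ₁) (proj θ (μs k)) := by
    refine ⟨Measure.isProbabilityMeasure_map hTm.aemeasurable, ?_, ?_⟩
    · rw [Measure.map_map measurable_fst hTm]
      have hcomp : (Prod.fst ∘ T)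
          = (fun y : Rd d => (inner ℝ (θ : Rd d) y : ℝ)) ∘ (fun x : Fin (K+1) → Rd d => x 0) := rfl
      rw [hcomp, ← Measure.map_map mθ (measurable_pi_apply 0), hpl2 0]
      simp [proj, hν]
    · rw [Measure.map_map measurable_snd hTm]
      have hcomp : (Prod.snd ∘ T)
          = (fun y : Rd d => (inner ℝ (θ : Rd d) y : ℝ)) ∘ (fun x : Fin (K+1) → Rd d => x k.succ) := rfl
      rw [hcomp, ← Measure.map_map mθ (measurable_pi_apply k.succ), hpl2 k.succ]
      simp [proj, hν]
  have hbdd : BddBelow ((fun γ : Measure (ℝ × ℝ) => ∫ q, |q.1 - q.2| ^ p ∂γ)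
      '' Coupling (proj θ μ₁) (proj θ (μs k))) := by
    refine ⟨0, ?_⟩
    rintro x ⟨γ, -, rfl⟩
    exact integral_nonneg fun q => Real.rpow_nonneg (abs_nonneg _) p
  have h1 : Wpp p (proj θ μ₁) (proj θ (μs k)) ≤ ∫ q, |q.1 - q.2| ^ p ∂(pl.map T) :=
    csInf_le hbdd ⟨pl.map T, hγmem, rfl⟩
  have hqm : Measurable fun q : ℝ × ℝ => |q.1 - q.2| ^ p :=
    (Real.continuous_rpow_const hp0).measurable.comp (measurable_fst.sub measurable_snd).abs
  have h2 : ∫ q, |q.1 - q.2| ^ p ∂(pl.map T)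
      = ∫ x, |inner ℝ (θ : Rd d) (x 0) - inner ℝ (θ : Rd d) (x k.succ)| ^ p ∂pl := by
    rw [integral_map hTm.aemeasurable hqm.aestronglyMeasurable]
  -- the cost function and its integrability
  set F : (Fin (K+1) → Rd d) → ℝ :=
    fun x => ⨆ i, ⨆ j, |inner ℝ (θ : Rd d) (x i) - inner ℝ (θ : Rd d) (x j)| with hF
  have hFm : Measurable F := by
    apply Measurable.iSup; intro i; apply Measurable.iSup; intro j
    exact ((mθ.comp (measurable_pi_apply i)).sub (mθ.comp (measurable_pi_apply j))).abs
  have hF0 : ∀ x, 0 ≤ F x := fun x =>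
    Real.iSup_nonneg fun i => Real.iSup_nonneg fun j => abs_nonneg _
  have hinner_le : ∀ y : Rd d, |(inner ℝ (θ : Rd d) y : ℝ)| ≤ ‖y‖ := by
    intro y
    calc |(inner ℝ (θ : Rd d) y : ℝ)| ≤ ‖(θ : Rd d)‖ * ‖y‖ := abs_real_inner_le_norm _ _
    _ = ‖y‖ := by rw [hθnorm, one_mul]
  -- bound F by twice the max of norms
  have hFle : ∀ x, F x ≤ 2 * ⨆ i, ‖x i‖ := by
    intro x
    have hbN : ∀ i, ‖x i‖ ≤ ⨆ i, ‖x i‖ := fun i =>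
      le_ciSup (f := fun i => ‖x i‖) (Set.finite_range _).bddAbove i
    refine Real.iSup_le (fun i => Real.iSup_le (fun j => ?_) ?_) ?_
    · calc |inner ℝ (θ : Rd d) (x i) - inner ℝ (θ : Rd d) (x j)|
          ≤ |(inner ℝ (θ : Rd d) (x i) : ℝ)| + |(inner ℝ (θ : Rd d) (x j) : ℝ)| := abs_sub _ _
      _ ≤ ‖x i‖ + ‖x j‖ := add_le_add (hinner_le _) (hinner_le _)
      _ ≤ (⨆ i, ‖x i‖) + ⨆ i, ‖x i‖ := add_le_add (hbN i) (hbN j)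
      _ = 2 * ⨆ i, ‖x i‖ := (two_mul _).symm
    all_goals
      exact mul_nonneg (by norm_num) (Real.iSup_nonneg fun i => norm_nonneg _)
  -- integrability of the cost
  have hint_i : ∀ i, Integrable (fun x : Fin (K+1) → Rd d => ‖x i‖ ^ p) pl := by
    intro i
    have hi := hνm i
    rw [← hpl2 i] at hi
    have hm : Measurable fun y : Rd d => ‖y‖ ^ p :=
      (Real.continuous_rpow_const hp0).measurable.comp measurable_norm
    exact (integrable_map_measure hm.aestronglyMeasurable
      (measurable_pi_apply i).aemeasurable).mp hi
  have hG : Integrable (fun x : Fin (K+1) → Rd d => (2:ℝ)^p * ∑ i, ‖x i‖ ^ p) pl :=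
    (integrable_finset_sum _ (fun i _ => hint_i i)).const_mul _
  have hcost_le : ∀ x : Fin (K+1) → Rd d, F x ^ p ≤ (2:ℝ)^p * ∑ i, ‖x i‖ ^ p := by
    intro x
    obtain ⟨i₀, hi₀⟩ := Finite.exists_max (fun i => ‖x i‖)
    have hN0 : (0:ℝ) ≤ ⨆ i, ‖x i‖ := Real.iSup_nonneg fun i => norm_nonneg _
    have h3 : F x ^ p ≤ (2 * ⨆ i, ‖x i‖) ^ p := Real.rpow_le_rpow (hF0 x) (hFle x) hp0
    have h4 : ((2:ℝ) * ⨆ i, ‖x i‖) ^ p = 2^p * (⨆ i, ‖x i‖)^p :=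
      Real.mul_rpow (by norm_num) hN0
    have h5 : (⨆ i, ‖x i‖) ^ p ≤ ‖x i₀‖ ^ p :=
      Real.rpow_le_rpow hN0 (ciSup_le hi₀) hp0
    have h6 : ‖x i₀‖ ^ p ≤ ∑ i, ‖x i‖ ^ p :=
      Finset.single_le_sum (fun i _ => Real.rpow_nonneg (norm_nonneg _) p)
        (Finset.mem_univ i₀)
    calc F x ^ p ≤ (2 * ⨆ i, ‖x i‖) ^ p := h3
    _ = 2^p * (⨆ i, ‖x i‖)^p := h4
    _ ≤ 2^p * ‖x i₀‖ ^ p := by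
        exact mul_le_mul_of_nonneg_left h5 (Real.rpow_nonneg (by norm_num) p)
    _ ≤ 2^p * ∑ i, ‖x i‖ ^ p := by
        exact mul_le_mul_of_nonneg_left h6 (Real.rpow_nonneg (by norm_num) p)
  have hcost_int : Integrable (fun x => F x ^ p) pl := by
    refine hG.mono' ?_ ?_
    · exact ((Real.continuous_rpow_const hp0).measurable.comp hFm).aestronglyMeasurable
    · filter_upwards with x
      rw [Real.norm_eq_abs, abs_of_nonneg (Real.rpow_nonneg (hF0 x) p)]
      exact hcost_le x
  have h7 : (∫ x, |(inner ℝ (θ : Rd d) (x 0) : ℝ) - inner ℝ (θ : Rd d) (x k.succ)| ^ p ∂pl)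
      ≤ ∫ x, F x ^ p ∂pl := by
    refine integral_mono_of_nonneg ?_ hcost_int ?_
    · filter_upwards with x
      exact Real.rpow_nonneg (abs_nonneg _) p
    · filter_upwards with x
      refine Real.rpow_le_rpow (abs_nonneg _) ?_ hp0
      have hb1 : |(inner ℝ (θ : Rd d) (x 0) : ℝ) - inner ℝ (θ : Rd d) (x k.succ)|
          ≤ ⨆ j, |(inner ℝ (θ : Rd d) (x 0) : ℝ) - inner ℝ (θ : Rd d) (x j)| :=
        le_ciSup (f := fun j => |(inner ℝ (θ : Rd d) (x 0) : ℝ) - inner ℝ (θ : Rd d) (x j)|)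
          (Set.finite_range _).bddAbove k.succ
      exact hb1.trans (le_ciSup
        (f := fun i => ⨆ j, |(inner ℝ (θ : Rd d) (x i) : ℝ) - inner ℝ (θ : Rd d) (x j)|)
        (Set.finite_range _).bddAbove 0)
  exact (h1.trans_eq h2).trans h7

/-- **Proposition 5 (es-MFSWB vs energy-based SMW).** Minimizing the es-MFSWB
objective over the barycenter is minimizing a lower bound of the energy-based
sliced multi-marginal Wasserstein cost with the maximal ground metric:
`inf_{μ₁} ESF(μ₁; μ_{2:K+1}) ≤ inf_{μ₁} ESMW_p^p(μ₁, μ_2, …, μ_{K+1}; c)`,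
where the infima range over probability measures `μ₁` with finite `p`-th moment for
which `g_{μ₁} θ = max_k W_p^p(θ♯μ₁, θ♯μ_k)` is measurable and the relevant
integrands are `σ`-integrable. Here `μs : Fin K → Measure (Rd d)` lists the
marginals `μ_2, …, μ_{K+1}` (`K ≥ 1`). -/
theorem esf_inf_le_esmw_inf (p : ℝ) (hp : 1 ≤ p) (d : ℕ) (hd : 1 ≤ d)
    (K : ℕ) (hK : 1 ≤ K) (μs : Fin K → Measure (Rd d))
    (hμs : ∀ k, IsProbabilityMeasure (μs k)) (hμsm : ∀ k, FiniteMoment p (μs k))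
    (g : Measure (Rd d) → sphere (0 : Rd d) 1 → ℝ)
    (hg : ∀ μ₁ θ, g μ₁ θ = ⨆ k, Wpp p (proj θ μ₁) (proj θ (μs k)))
    (S : Set (Measure (Rd d)))
    (hS : S = {μ₁ | IsProbabilityMeasure μ₁ ∧ FiniteMoment p μ₁ ∧ Measurable (g μ₁) ∧
      Integrable (g μ₁) (uniformSphere d) ∧
      Integrable (fun θ => g μ₁ θ * Real.exp (g μ₁ θ)) (uniformSphere d) ∧
      Integrable (fun θ => Real.exp (g μ₁ θ) * SMWtheta p (Fin.cons μ₁ μs) θ)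
        (uniformSphere d)}) :
    sInf ((fun μ₁ =>
        (∫ θ, g μ₁ θ * Real.exp (g μ₁ θ) ∂(uniformSphere d)) /
          (∫ θ, Real.exp (g μ₁ θ) ∂(uniformSphere d))) '' S) ≤
    sInf ((fun μ₁ =>
        (∫ θ, SMWtheta p (Fin.cons μ₁ μs) θ * Real.exp (g μ₁ θ) ∂(uniformSphere d)) /
          (∫ θ, Real.exp (g μ₁ θ) ∂(uniformSphere d))) '' S) := by
  have hp0 : (0:ℝ) ≤ p := le_trans zero_le_one hp
  rcases Set.eq_empty_or_nonempty S with hSe | hSne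
  · simp [hSe]
  have hgnn : ∀ μ₁, ∀ θ : sphere (0 : Rd d) 1, 0 ≤ g μ₁ θ := by
    intro μ₁ θ
    rw [hg]
    exact Real.iSup_nonneg fun k => Wpp_nonneg p hp0 _ _
  have hgle : ∀ μ₁ ∈ S, ∀ θ : sphere (0 : Rd d) 1,
      g μ₁ θ ≤ SMWtheta p (Fin.cons μ₁ μs) θ := by
    intro μ₁ hμ₁ θ
    rw [hS] at hμ₁
    obtain ⟨h1, h2, -⟩ := hμ₁
    rw [hg]
    exact key_pointwise p hp hK μs hμs hμsm μ₁ h1 h2 θ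
  have hden : ∀ μ₁ : Measure (Rd d),
      0 ≤ ∫ θ, Real.exp (g μ₁ θ) ∂(uniformSphere d) :=
    fun μ₁ => integral_nonneg fun θ => (Real.exp_nonneg _)
  have hmain : ∀ μ₁ ∈ S,
      (∫ θ, g μ₁ θ * Real.exp (g μ₁ θ) ∂(uniformSphere d)) /
          (∫ θ, Real.exp (g μ₁ θ) ∂(uniformSphere d)) ≤
      (∫ θ, SMWtheta p (Fin.cons μ₁ μs) θ * Real.exp (g μ₁ θ) ∂(uniformSphere d)) /
          (∫ θ, Real.exp (g μ₁ θ) ∂(uniformSphere d)) := by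
    intro μ₁ hmem
    have hmem' := hmem
    rw [hS] at hmem'
    obtain ⟨hP, hM, hMeas, hInt1, hInt2, hInt3⟩ := hmem'
    have hInt3' : Integrable
        (fun θ => SMWtheta p (Fin.cons μ₁ μs) θ * Real.exp (g μ₁ θ))
        (uniformSphere d) := by
      simpa [mul_comm] using hInt3
    have hnum : (∫ θ, g μ₁ θ * Real.exp (g μ₁ θ) ∂(uniformSphere d)) ≤
        ∫ θ, SMWtheta p (Fin.cons μ₁ μs) θ * Real.exp (g μ₁ θ) ∂(uniformSphere d) := by
      refine integral_mono hInt2 hInt3' ?_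
      intro θ
      exact mul_le_mul_of_nonneg_right (hgle μ₁ hmem θ) (Real.exp_nonneg _)
    rcases (hden μ₁).eq_or_lt with h0 | h0
    · rw [← h0]
      simp
    · exact (div_le_div_iff_of_pos_right h0).mpr hnum
  have hbdd : BddBelow ((fun μ₁ =>
      (∫ θ, g μ₁ θ * Real.exp (g μ₁ θ) ∂(uniformSphere d)) /
        (∫ θ, Real.exp (g μ₁ θ) ∂(uniformSphere d))) '' S) := by
    refine ⟨0, ?_⟩
    rintro x ⟨μ₁, hμ₁, rfl⟩
    exact div_nonneg (integral_nonneg fun θ =>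
      mul_nonneg (hgnn μ₁ θ) (Real.exp_nonneg _)) (hden μ₁)
  refine le_csInf (hSne.image _) ?_
  rintro b ⟨μ₁, hμ₁, rfl⟩
  exact le_trans (csInf_le hbdd ⟨μ₁, hμ₁, rfl⟩) (hmain μ₁ hμ₁)
end
end

section
/- Let p ≥ 1, d ≥ 1, K ≥ 2, and let μ_1, μ_2, …, μ_K be probability measures on ℝ^d with finite p-th moments. Set g_{μ_1}(θ) := max_{2≤k≤K} W_p^p(θ♯μ_1, θ♯μ_k), assumed measurable with the relevant integrands σ-integrable on S^{d−1}. Then ESMW_p^p(μ_1, μ_2, …, μ_K; c) ≥ ESF(μ_1; μ_{2:K}): for every fixed μ_1, the energy-based sliced multi-marginal Wasserstein cost with the maximal ground metric is at least the es-MFSWB objective. -/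
open MeasureTheory Metric Real

noncomputable section

lemma map_eval_pi' {ι : Type*} [Fintype ι] {α : ι → Type*} [∀ i, MeasurableSpace (α i)]
    (μ : ∀ i, Measure (α i)) [∀ i, IsProbabilityMeasure (μ i)] (i : ι) :
    (Measure.pi μ).map (fun x => x i) = μ i := by
  classical
  ext s hs
  rw [Measure.map_apply (measurable_pi_apply i) hs]
  have : (fun x : ∀ j, α j => x i) ⁻¹' s
      = Set.pi Set.univ (Function.update (fun j => (Set.univ : Set (α j))) i s) := by
    simpa using Set.eval_preimage (i := i) (s := s)
  rw [this, Measure.pi_pi]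
  rw [Finset.prod_eq_single i (fun j _ hj => by simp [Function.update_of_ne hj])
    (by simp)]
  simp

lemma g_le_smw (p : ℝ) (hp : 1 ≤ p) {d K : ℕ} (hK : 1 ≤ K)
    (μ₁ : Measure (Rd d)) (μs : Fin K → Measure (Rd d))
    (hμ₁ : IsProbabilityMeasure μ₁) (hμ₁m : FiniteMoment p μ₁)
    (hμs : ∀ k, IsProbabilityMeasure (μs k)) (hμsm : ∀ k, FiniteMoment p (μs k))
    (θ : sphere (0 : Rd d) 1) :
    (⨆ k, Wpp p (proj θ μ₁) (proj θ (μs k))) ≤ SMWtheta p (Fin.cons μ₁ μs) θ := by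
  have hp0 : (0:ℝ) ≤ p := le_trans zero_le_one hp
  haveI : Nonempty (Fin K) := ⟨⟨0, hK⟩⟩
  set ν : Fin (K+1) → Measure (Rd d) := Fin.cons μ₁ μs with hν
  haveI hνP : ∀ k, IsProbabilityMeasure (ν k) := Fin.cases hμ₁ hμs
  have hνm : ∀ k, FiniteMoment p (ν k) := Fin.cases hμ₁m hμsm
  -- the projection map
  set T : Rd d → ℝ := fun x => inner ℝ (θ : Rd d) x with hT
  have hTc : Continuous T := Continuous.inner continuous_const continuous_id
  have hTm : Measurable T := hTc.measurable
  have hθ1 : ‖(θ : Rd d)‖ = 1 := by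
    have := θ.2
    rwa [mem_sphere_zero_iff_norm] at this
  have hTle : ∀ x : Rd d, |T x| ≤ ‖x‖ := by
    intro x
    calc |T x| ≤ ‖(θ : Rd d)‖ * ‖x‖ := abs_real_inner_le_norm _ _
    _ = ‖x‖ := by rw [hθ1, one_mul]
  -- the cost function
  set cost : (Fin (K+1) → Rd d) → ℝ :=
    fun x => (⨆ i, ⨆ j, |T (x i) - T (x j)|) ^ p with hcost
  have hbdd : ∀ (f : Fin (K+1) → ℝ), BddAbove (Set.range f) :=
    fun f => (Set.finite_range f).bddAbove
  have hsup0 : ∀ x : Fin (K+1) → Rd d, (0:ℝ) ≤ ⨆ i, ⨆ j, |T (x i) - T (x j)| := by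
    intro x
    have h1 : (0:ℝ) ≤ ⨆ j, |T (x 0) - T (x j)| :=
      le_trans (by simp) (le_ciSup (hbdd _) 0)
    exact le_trans h1 (le_ciSup (f := fun i => ⨆ j, |T (x i) - T (x j)|) (hbdd _) 0)
  have hcost_meas : Measurable cost := by
    apply (Real.continuous_rpow_const hp0).measurable.comp
    apply Measurable.iSup
    intro i
    apply Measurable.iSup
    intro j
    exact ((hTm.comp (measurable_pi_apply i)).sub (hTm.comp (measurable_pi_apply j))).abs
  have hcost_nonneg : ∀ x, 0 ≤ cost x := fun x => Real.rpow_nonneg (hsup0 x) p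
  -- pointwise bound on the cost
  have hcost_bound : ∀ x : Fin (K+1) → Rd d,
      cost x ≤ 2 ^ p * ∑ l, ‖x l‖ ^ p := by
    intro x
    obtain ⟨l0, hl0⟩ := Finite.exists_max (fun l => ‖x l‖)
    have hS : (⨆ i, ⨆ j, |T (x i) - T (x j)|) ≤ 2 * ‖x l0‖ := by
      apply ciSup_le; intro i; apply ciSup_le; intro j
      calc |T (x i) - T (x j)| ≤ |T (x i)| + |T (x j)| := abs_sub _ _
      _ ≤ ‖x i‖ + ‖x j‖ := add_le_add (hTle _) (hTle _)
      _ ≤ ‖x l0‖ + ‖x l0‖ := add_le_add (hl0 i) (hl0 j)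
      _ = 2 * ‖x l0‖ := (two_mul _).symm
    calc cost x ≤ (2 * ‖x l0‖) ^ p := Real.rpow_le_rpow (hsup0 x) hS hp0
    _ = 2 ^ p * ‖x l0‖ ^ p := Real.mul_rpow (by norm_num) (norm_nonneg _)
    _ ≤ 2 ^ p * ∑ l, ‖x l‖ ^ p := by
        apply mul_le_mul_of_nonneg_left _ (Real.rpow_nonneg (by norm_num) p)
        exact Finset.single_le_sum (fun l _ => Real.rpow_nonneg (norm_nonneg _) p)
          (Finset.mem_univ l0)
  -- the SMW set is nonempty
  have hpi : Measure.pi ν ∈ MCoupling ν :=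
    ⟨inferInstance, fun k => map_eval_pi' ν k⟩
  apply le_csInf ⟨_, Set.mem_image_of_mem _ hpi⟩
  rintro b ⟨pl, ⟨hplP, hplm⟩, rfl⟩
  haveI := hplP
  show (⨆ k, Wpp p (proj θ μ₁) (proj θ (μs k))) ≤ ∫ x, cost x ∂pl
  -- integrability of the cost under pl
  have hInt_norm : ∀ l : Fin (K+1), Integrable (fun x : Fin (K+1) → Rd d => ‖x l‖ ^ p) pl := by
    intro l
    have h1 : Integrable (fun y : Rd d => ‖y‖ ^ p) (pl.map (fun x => x l)) := by
      rw [hplm l]; exact hνm l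
    have hnm : AEStronglyMeasurable (fun y : Rd d => ‖y‖ ^ p)
        (pl.map (fun x => x l)) :=
      (((Real.continuous_rpow_const hp0).comp continuous_norm).measurable).aestronglyMeasurable
    have := (integrable_map_measure hnm (measurable_pi_apply l).aemeasurable).mp h1
    exact this
  have hInt_cost : Integrable cost pl := by
    apply Integrable.mono' (((integrable_finset_sum Finset.univ
      (fun l _ => hInt_norm l)).const_mul (2 ^ p)))
      hcost_meas.aestronglyMeasurable
    filter_upwards with x
    rw [Real.norm_eq_abs, abs_of_nonneg (hcost_nonneg x)]
    exact hcost_bound x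
  -- now bound each Wpp
  apply ciSup_le
  intro k
  -- the two-marginal coupling induced by pl
  set f : (Fin (K+1) → Rd d) → ℝ × ℝ := fun x => (T (x 0), T (x k.succ)) with hf
  have hfm : Measurable f :=
    (hTm.comp (measurable_pi_apply 0)).prodMk (hTm.comp (measurable_pi_apply k.succ))
  have hmem : pl.map f ∈ Coupling (proj θ μ₁) (proj θ (μs k)) := by
    refine ⟨Measure.isProbabilityMeasure_map hfm.aemeasurable, ?_, ?_⟩
    · rw [Measure.map_map measurable_fst hfm]
      have : (Prod.fst ∘ f) = T ∘ (fun x => x 0) := rfl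
      rw [this, ← Measure.map_map hTm (measurable_pi_apply 0), hplm 0]
      simp only [hν, Fin.cons_zero]
      rfl
    · rw [Measure.map_map measurable_snd hfm]
      have : (Prod.snd ∘ f) = T ∘ (fun x => x k.succ) := rfl
      rw [this, ← Measure.map_map hTm (measurable_pi_apply k.succ), hplm k.succ]
      simp only [hν, Fin.cons_succ]
      rfl
  have hWle : Wpp p (proj θ μ₁) (proj θ (μs k)) ≤ ∫ q, |q.1 - q.2| ^ p ∂(pl.map f) := by
    refine csInf_le ⟨0, ?_⟩ ⟨_, hmem, rfl⟩
    rintro r ⟨γ, -, rfl⟩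
    simpa using integral_nonneg fun q : ℝ × ℝ => Real.rpow_nonneg (abs_nonneg (q.1 - q.2)) p
  refine hWle.trans ?_
  have hqm : Measurable (fun q : ℝ × ℝ => |q.1 - q.2| ^ p) :=
    (Real.continuous_rpow_const hp0).measurable.comp (measurable_fst.sub measurable_snd).abs
  rw [integral_map hfm.aemeasurable hqm.aestronglyMeasurable]
  apply integral_mono_of_nonneg
  · filter_upwards with x; exact Real.rpow_nonneg (abs_nonneg _) p
  · exact hInt_cost
  · filter_upwards with x
    apply Real.rpow_le_rpow (abs_nonneg _) _ hp0
    have h1 : |T (x 0) - T (x k.succ)| ≤ ⨆ j, |T (x 0) - T (x j)| :=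
      le_ciSup (f := fun j => |T (x 0) - T (x j)|) (hbdd _) k.succ
    exact h1.trans (le_ciSup (f := fun i => ⨆ j, |T (x i) - T (x j)|) (hbdd _) 0)


/-- For every fixed `μ₁`, the energy-based sliced multi-marginal Wasserstein cost
with the maximal ground metric dominates the es-MFSWB objective:
`ESMW_p^p(μ₁, μ_2, …, μ_{K+1}; c) ≥ ESF(μ₁; μ_{2:K+1})`, where
`g θ = max_k W_p^p(θ♯μ₁, θ♯μ_k)` and the slicing density is proportional to
`exp (g θ)`. Here `μs : Fin K → Measure (Rd d)` lists `μ_2, …, μ_{K+1}` (`K ≥ 1`). -/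
theorem esmw_ge_esf (p : ℝ) (hp : 1 ≤ p) (d : ℕ) (hd : 1 ≤ d)
    (K : ℕ) (hK : 1 ≤ K) (μ₁ : Measure (Rd d)) (μs : Fin K → Measure (Rd d))
    (hμ₁ : IsProbabilityMeasure μ₁) (hμ₁m : FiniteMoment p μ₁)
    (hμs : ∀ k, IsProbabilityMeasure (μs k)) (hμsm : ∀ k, FiniteMoment p (μs k))
    (g : sphere (0 : Rd d) 1 → ℝ)
    (hg : g = fun θ => ⨆ k, Wpp p (proj θ μ₁) (proj θ (μs k)))
    (hgmeas : Measurable g) (hgint : Integrable g (uniformSphere d))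
    (hgeint : Integrable (fun θ => g θ * Real.exp (g θ)) (uniformSphere d))
    (hsmwint : Integrable
      (fun θ => SMWtheta p (Fin.cons μ₁ μs) θ * Real.exp (g θ)) (uniformSphere d)) :
    (∫ θ, g θ * Real.exp (g θ) ∂(uniformSphere d)) /
        (∫ θ, Real.exp (g θ) ∂(uniformSphere d)) ≤
      (∫ θ, SMWtheta p (Fin.cons μ₁ μs) θ * Real.exp (g θ) ∂(uniformSphere d)) /
        (∫ θ, Real.exp (g θ) ∂(uniformSphere d)) := by
  have key : ∀ θ, g θ ≤ SMWtheta p (Fin.cons μ₁ μs) θ := by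
    intro θ
    simp only [hg]
    exact g_le_smw p hp hK μ₁ μs hμ₁ hμ₁m hμs hμsm θ
  have h1 : (∫ θ, g θ * Real.exp (g θ) ∂(uniformSphere d)) ≤
      ∫ θ, SMWtheta p (Fin.cons μ₁ μs) θ * Real.exp (g θ) ∂(uniformSphere d) :=
    integral_mono hgeint hsmwint fun θ =>
      mul_le_mul_of_nonneg_right (key θ) (Real.exp_pos _).le
  have hD : 0 ≤ ∫ θ, Real.exp (g θ) ∂(uniformSphere d) :=
    integral_nonneg fun θ => (Real.exp_pos _).le
  rcases hD.eq_or_lt with h | h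
  · rw [← h]; simp
  · exact (div_le_div_iff_of_pos_right h).mpr h1
end
end
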